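/- arXiv:1705.06842 — 10 statements merged into one kernel-verified Lean document; each statement's English description precedes it below -/
import Mathlib

section
/- Let G be a group and φ an automorphism of G. If the twisted conjugacy class [e]_φ = {g⁻¹·φ(g) : g ∈ G} is a subgroup of G, then it is a normal subgroup of G. -/
/-- The twisted conjugacy class of the identity under the automorphism `φ`:
`[e]_φ = {g⁻¹ · φ(g) : g ∈ G}`. -/
def twistedClassAut {G : Type*} [Group G] (φ : G ≃* G) : Set G :=
  {y : G | ∃ g : G, y = g⁻¹ * φ g}

theorem stmt_2 {G : Type*} [Group G] (φ : G ≃* G) (H : Subgroup G)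
    (hH : (H : Set G) = twistedClassAut φ) :
    H.Normal := by
  constructor
  intro h hh g
  have mem_iff : ∀ y : G, y ∈ H ↔ ∃ x : G, y = x⁻¹ * φ x := by
    intro y
    constructor
    · intro hy
      have : y ∈ (H : Set G) := hy
      rw [hH] at this; exact this
    · intro hy
      have : y ∈ twistedClassAut φ := hy
      rw [← hH] at this; exact this
  obtain ⟨x, hx⟩ := (mem_iff h).mp hh
  have h1 : g * h * (φ g)⁻¹ ∈ H := by
    refine (mem_iff _).mpr ⟨x * g⁻¹, ?_⟩
    simp [hx, map_mul, mul_assoc]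
  have h2 : φ g * g⁻¹ ∈ H := by
    have : g * (φ g⁻¹) ∈ H := (mem_iff _).mpr ⟨g⁻¹, by simp⟩
    have := H.inv_mem this
    simpa using this
  have := H.mul_mem h1 h2
  simpa [mul_assoc] using this
end

section
/- Let φ and ψ be automorphisms of a group G such that the twisted conjugacy classes [e]_φ = {g⁻¹·φ(g) : g ∈ G} and [e]_ψ = {g⁻¹·ψ(g) : g ∈ G} are subgroups of G. Then [e]_{φ∘ψ} is contained in the setwise product [e]_φ · [e]_ψ. -/
open Pointwise

theorem stmt_3 {G : Type*} [Group G] (φ ψ : G ≃* G)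
    (hφ : ∃ H : Subgroup G, (H : Set G) = twistedClassAut φ)
    (hψ : ∃ H : Subgroup G, (H : Set G) = twistedClassAut ψ) :
    twistedClassAut (ψ.trans φ) ⊆ twistedClassAut φ * twistedClassAut ψ := by
  obtain ⟨H, hH⟩ := hφ
  rintro x ⟨g, rfl⟩
  set b : G := g⁻¹ * ψ g with hb
  have hbB : b ∈ twistedClassAut ψ := ⟨g, rfl⟩
  have key : ∀ t : G, t⁻¹ * φ t ∈ H := fun t => by
    rw [← SetLike.mem_coe, hH]; exact ⟨t, rfl⟩
  have hc : b * ((ψ g)⁻¹ * φ (ψ g)) * b⁻¹ ∈ H := by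
    have e1 := key (ψ g * b⁻¹)
    have e2 := key b⁻¹
    have heq : b * ((ψ g)⁻¹ * φ (ψ g)) * b⁻¹
        = ((ψ g * b⁻¹)⁻¹ * φ (ψ g * b⁻¹)) * ((b⁻¹)⁻¹ * φ b⁻¹)⁻¹ := by
      simp only [map_mul, map_inv]
      group
    rw [heq]
    exact mul_mem e1 (inv_mem e2)
  have hcA : b * ((ψ g)⁻¹ * φ (ψ g)) * b⁻¹ ∈ twistedClassAut φ := by
    rw [← hH]; exact hc
  have hx : g⁻¹ * (ψ.trans φ) g = (b * ((ψ g)⁻¹ * φ (ψ g)) * b⁻¹) * b := by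
    simp only [MulEquiv.trans_apply, hb]
    group
  exact hx ▸ Set.mul_mem_mul hcA hbB
end

section
/- Let G be a group generated by elements x₁, …, x_n (with n ≥ 2) such that for every g in G the twisted conjugacy class [e]_g = {[x,g] : x ∈ G} is a subgroup of G. Then the derived subgroup γ₂(G) = [G,G] equals the setwise product [e]_{x₁} · [e]_{x₂} · … · [e]_{x_{n−1}}. -/
open Pointwise
open scoped commutatorElement

/-- The twisted conjugacy class of the identity under the inner automorphism
induced by `g`: `[e]_g = {⁅x, g⁆ : x ∈ G}`. -/
def twistedClass {G : Type*} [Group G] (g : G) : Set G :=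
  {y : G | ∃ x : G, y = ⁅x, g⁆}

lemma twisted_mem {G : Type*} [Group G] {g : G} {H : Subgroup G}
    (hH : (H : Set G) = twistedClass g) (c : G) : ⁅c, g⁆ ∈ H := by
  have : ⁅c, g⁆ ∈ (H : Set G) := by rw [hH]; exact ⟨c, rfl⟩
  exact this

lemma twisted_normal {G : Type*} [Group G] {g : G} {H : Subgroup G}
    (hH : (H : Set G) = twistedClass g) : H.Normal := by
  constructor
  intro a ha b
  obtain ⟨c, rfl⟩ : ∃ c, a = ⁅c, g⁆ := by rwa [← SetLike.mem_coe, hH] at ha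
  have key : b * ⁅c, g⁆ * b⁻¹ = ⁅b * c, g⁆ * ⁅b, g⁆⁻¹ := by
    simp only [commutatorElement_def]; group
  rw [key]
  exact mul_mem (twisted_mem hH _) (inv_mem (twisted_mem hH _))

lemma foldr_sup_normal {G : Type*} [Group G] (l : List (Subgroup G))
    (hl : ∀ K ∈ l, K.Normal) : (l.foldr (· ⊔ ·) ⊥).Normal := by
  induction l with
  | nil => exact (inferInstance : (⊥ : Subgroup G).Normal)
  | cons K t ih =>
    have h1 : K.Normal := hl K (List.mem_cons_self)
    have h2 : (t.foldr (· ⊔ ·) ⊥).Normal := ih fun K hK => hl K (List.mem_cons_of_mem _ hK)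
    exact Subgroup.sup_normal K _

lemma foldr_sup_coe_prod {G : Type*} [Group G] (l : List (Subgroup G))
    (hl : ∀ K ∈ l, K.Normal) :
    ((l.foldr (· ⊔ ·) ⊥ : Subgroup G) : Set G) = (l.map (fun K : Subgroup G => (K : Set G))).prod := by
  induction l with
  | nil => simp only [List.foldr_nil, Subgroup.coe_bot, List.map_nil, List.prod_nil]; exact Set.singleton_one
  | cons K t ih =>
    have h2 : (t.foldr (· ⊔ ·) ⊥).Normal := foldr_sup_normal t fun K hK => hl K (List.mem_cons_of_mem _ hK)
    rw [List.foldr_cons, List.map_cons, List.prod_cons,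
      ← ih fun K hK => hl K (List.mem_cons_of_mem _ hK), Subgroup.mul_normal]

lemma le_foldr_sup {G : Type*} [Group G] (l : List (Subgroup G)) {K : Subgroup G}
    (hK : K ∈ l) : K ≤ l.foldr (· ⊔ ·) ⊥ := by
  induction l with
  | nil => cases hK
  | cons J t ih =>
    rcases List.mem_cons.mp hK with rfl | h
    · exact le_sup_left
    · exact (ih h).trans le_sup_right

lemma foldr_sup_le {G : Type*} [Group G] (l : List (Subgroup G)) {C : Subgroup G}
    (hl : ∀ K ∈ l, K ≤ C) : l.foldr (· ⊔ ·) ⊥ ≤ C := by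
  induction l with
  | nil => exact bot_le
  | cons J t ih =>
    exact sup_le (hl J (List.mem_cons_self))
      (ih fun K hK => hl K (List.mem_cons_of_mem _ hK))

theorem stmt_6 {G : Type*} [Group G] (n : ℕ) (hn : 2 ≤ n) (x : Fin n → G)
    (hgen : Subgroup.closure (Set.range x) = ⊤)
    (h : ∀ g : G, ∃ H : Subgroup G, (H : Set G) = twistedClass g) :
    (((⊤ : Subgroup G).lowerCentralSeries 1 : Subgroup G) : Set G) =
      (List.ofFn fun i : Fin (n - 1) => twistedClass (x (Fin.castLE (Nat.sub_le n 1) i))).prod := by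
  set m := n - 1 with hm
  set xi : Fin m → G := fun i => x (Fin.castLE (Nat.sub_le n 1) i) with hxi
  choose H hH using h
  set Hs : Fin m → Subgroup G := fun i => H (xi i) with hHs
  set N : Subgroup G := (List.ofFn Hs).foldr (· ⊔ ·) ⊥ with hN
  have hnorm : ∀ K ∈ List.ofFn Hs, K.Normal := by
    intro K hK
    obtain ⟨i, rfl⟩ := Set.mem_range.mp (List.mem_ofFn.mp hK)
    exact twisted_normal (hH (xi i))
  have hHle : ∀ i : Fin m, Hs i ≤ N := fun i =>
    le_foldr_sup _ (List.mem_ofFn.mpr ⟨i, rfl⟩)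
  haveI hNnorm : N.Normal := foldr_sup_normal _ hnorm
  -- commutators of generators lie in N
  have hbase : ∀ (a : G) (i : Fin m), ⁅a, xi i⁆ ∈ N := fun a i =>
    hHle i (twisted_mem (hH (xi i)) a)
  have hgencomm : ∀ i j : Fin n, ⁅x i, x j⁆ ∈ N := by
    intro i j
    by_cases hj : (j : ℕ) < m
    · have : x j = xi ⟨j, hj⟩ := rfl
      rw [this]; exact hbase _ _
    · by_cases hi : (i : ℕ) < m
      · have : x i = xi ⟨i, hi⟩ := rfl
        rw [← commutatorElement_inv, this]
        exact inv_mem (hbase _ _)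
      · have : i = j := by
          have hi' : (i : ℕ) = n - 1 := le_antisymm (Nat.lt_succ_iff.mp (by
            have := i.isLt; omega)) (le_of_not_gt hi)
          have hj' : (j : ℕ) = n - 1 := le_antisymm (Nat.lt_succ_iff.mp (by
            have := j.isLt; omega)) (le_of_not_gt hj)
          exact Fin.ext (hi'.trans hj'.symm)
        subst this
        rw [commutatorElement_self]
        exact one_mem N
  -- work in the quotient
  have hcomm : ∀ a b : G, ⁅a, b⁆ ∈ N := by
    set f := QuotientGroup.mk' N with hf
    have hsurj : Function.Surjective f := QuotientGroup.mk'_surjective N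
    have hStop : Subgroup.closure (f '' Set.range x) = ⊤ := by
      rw [← MonoidHom.map_closure, hgen]
      exact Subgroup.map_top_of_surjective f hsurj
    have hqcomm : ∀ a b : G ⧸ N, Commute a b := by
      intro a b
      have ha : a ∈ Subgroup.closure (f '' Set.range x) := hStop ▸ Subgroup.mem_top a
      have hb : b ∈ Subgroup.closure (f '' Set.range x) := hStop ▸ Subgroup.mem_top b
      induction ha, hb using Subgroup.closure_induction₂ with
      | mem u v hu hv =>
        obtain ⟨a', ⟨i, rfl⟩, rfl⟩ := hu
        obtain ⟨b', ⟨j, rfl⟩, rfl⟩ := hv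
        rw [← commutatorElement_eq_one_iff_commute, ← map_commutatorElement,
          QuotientGroup.mk'_apply, QuotientGroup.eq_one_iff]
        exact hgencomm i j
      | one_left v hv => exact Commute.one_left v
      | one_right u hu => exact Commute.one_right u
      | mul_left u v w _ _ _ h1 h2 => exact h1.mul_left h2
      | mul_right u v w _ _ _ h1 h2 => exact h1.mul_right h2
      | inv_left u v _ _ h1 => exact h1.inv_left
      | inv_right u v _ _ h1 => exact h1.inv_right
    intro a b
    rw [← QuotientGroup.eq_one_iff (G := G) (N := N), ← QuotientGroup.mk'_apply,
      map_commutatorElement, commutatorElement_eq_one_iff_commute]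
    exact hqcomm _ _
  have hcommN : commutator G = N := by
    apply le_antisymm
    · rw [commutator_def, Subgroup.commutator_le]
      intro a _ b _
      exact hcomm a b
    · apply foldr_sup_le
      intro K hK
      obtain ⟨i, rfl⟩ := Set.mem_range.mp (List.mem_ofFn.mp hK)
      intro a ha
      obtain ⟨c, rfl⟩ : ∃ c, a = ⁅c, xi i⁆ := by
        rwa [← SetLike.mem_coe, hH (xi i)] at ha
      exact Subgroup.commutator_mem_commutator (Subgroup.mem_top c) (Subgroup.mem_top _)
  rw [Subgroup.top_lowerCentralSeries_one, hcommN, foldr_sup_coe_prod _ hnorm, List.map_ofFn]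
  exact congrArg (fun l : List (Set G) => l.prod) (congrArg List.ofFn (funext fun i => hH (xi i)))
end

section
/- Let G be a group generated by elements x₁, …, x_n such that for every g in G the twisted conjugacy class [e]_g = {[x,g] : x ∈ G} is a subgroup of G. Suppose that for some k the k-th term of the lower central series satisfies γ_k(G) = [e]_{h₁} · [e]_{h₂} · … · [e]_{h_s} (a setwise product) for some elements h₁, …, h_s ∈ G. Setting p_{ij} = [x_i, h_j] for 1 ≤ i ≤ n and 1 ≤ j ≤ s, one has γ_{k+1}(G) = ∏_{i,j} [e]_{p_{ij}} (setwise product over all pairs (i,j)). -/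
open Pointwise
open scoped commutatorElement

section Aux

variable {G : Type*} [Group G]

lemma tc_one_mem (g : G) : (1 : G) ∈ twistedClass g :=
  ⟨1, by simp [commutatorElement_def]⟩

/-- If a twisted class is (the carrier of) a subgroup, that subgroup is normal. -/
lemma tc_normal {g : G} {H : Subgroup G} (hH : (H : Set G) = twistedClass g) :
    H.Normal := by
  constructor
  intro m hm a
  have hm' : m ∈ twistedClass g := by rw [← hH] at *; exact hm
  obtain ⟨z, rfl⟩ := hm'
  have h1 : ⁅a * z, g⁆ ∈ H := by
    have : ⁅a * z, g⁆ ∈ twistedClass g := ⟨a * z, rfl⟩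
    rwa [← hH] at this
  have h2 : ⁅a, g⁆ ∈ H := by
    have : ⁅a, g⁆ ∈ twistedClass g := ⟨a, rfl⟩
    rwa [← hH] at this
  have key : a * ⁅z, g⁆ * a⁻¹ = ⁅a * z, g⁆ * ⁅a, g⁆⁻¹ := by
    simp only [commutatorElement_def]; group
  rw [key]
  exact H.mul_mem h1 (H.inv_mem h2)

lemma one_mem_listProd {L : List (Set G)} (h1 : ∀ S ∈ L, (1 : G) ∈ S) :
    (1 : G) ∈ L.prod := by
  induction L with
  | nil => simp [Set.mem_one]
  | cons S T ih =>
    rw [List.prod_cons]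
    exact ⟨1, h1 S (List.mem_cons_self), 1,
      ih fun S' hS' => h1 S' (List.mem_cons_of_mem _ hS'), one_mul 1⟩

lemma subset_listProd {L : List (Set G)} (h1 : ∀ S ∈ L, (1 : G) ∈ S) :
    ∀ S ∈ L, S ⊆ L.prod := by
  induction L with
  | nil => intro S hS; simp at hS
  | cons S T ih =>
    intro S' hS'
    rw [List.prod_cons]
    rcases List.mem_cons.mp hS' with rfl | hS'
    · intro a ha
      exact ⟨a, ha, 1, one_mem_listProd fun S'' hS'' => h1 S'' (List.mem_cons_of_mem _ hS''),
        mul_one a⟩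
    · intro a ha
      exact ⟨1, h1 S (List.mem_cons_self), a,
        ih (fun S'' hS'' => h1 S'' (List.mem_cons_of_mem _ hS'')) S' hS' ha, one_mul a⟩

lemma listProd_pred {L : List (Set G)} {P : G → Prop}
    (hmul : ∀ a b, P a → P b → P (a * b)) (h1 : P 1)
    (hmem : ∀ S ∈ L, ∀ y ∈ S, P y) : ∀ a ∈ L.prod, P a := by
  induction L with
  | nil => intro a ha; rw [List.prod_nil, Set.mem_one] at ha; rwa [ha]
  | cons S T ih =>
    intro a ha
    rw [List.prod_cons] at ha
    obtain ⟨b, hb, c, hc, rfl⟩ := ha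
    exact hmul b c (hmem S (List.mem_cons_self) b hb)
      (ih (fun S' hS' => hmem S' (List.mem_cons_of_mem _ hS')) c hc)

/-- A list product of carriers of normal subgroups is the carrier of a normal subgroup,
namely the join, which is both an upper bound and least such. -/
lemma listProd_subgroup {L : List (Set G)}
    (hL : ∀ S ∈ L, ∃ H : Subgroup G, H.Normal ∧ (H : Set G) = S) :
    ∃ N : Subgroup G, N.Normal ∧ (N : Set G) = L.prod ∧
      (∀ S ∈ L, S ⊆ (N : Set G)) ∧
      ∀ K : Subgroup G, (∀ S ∈ L, S ⊆ (K : Set G)) → N ≤ K := by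
  induction L with
  | nil =>
    refine ⟨⊥, inferInstance, ?_, fun S hS => (List.not_mem_nil hS).elim, fun K _ => bot_le⟩
    rw [List.prod_nil]
    ext a; simp [Set.mem_one]
  | cons S T ih =>
    obtain ⟨H, hHn, hHS⟩ := hL S (List.mem_cons_self)
    obtain ⟨N, hNn, hNT, hsub, hmin⟩ := ih fun S' hS' => hL S' (List.mem_cons_of_mem _ hS')
    haveI := hHn; haveI := hNn
    refine ⟨H ⊔ N, Subgroup.sup_normal H N, ?_, ?_, ?_⟩
    · rw [List.prod_cons, ← hHS, ← hNT, Subgroup.mul_normal]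
    · intro S' hS'
      rcases List.mem_cons.mp hS' with rfl | hS'
      · rw [← hHS]
        exact SetLike.coe_subset_coe.mpr le_sup_left
      · exact (hsub S' hS').trans (SetLike.coe_subset_coe.mpr le_sup_right)
    · intro K hK
      refine sup_le ?_ (hmin K fun S' hS' => hK S' (List.mem_cons_of_mem _ hS'))
      rw [← SetLike.coe_subset_coe, hHS]
      exact hK S (List.mem_cons_self)

lemma lcs_succ_eq (m : ℕ) :
    (⊤ : Subgroup G).lowerCentralSeries (m + 1) = ⁅(⊤ : Subgroup G).lowerCentralSeries m, (⊤ : Subgroup G)⁆ := rfl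

end Aux

/-- `(⊤ : Subgroup G).lowerCentralSeries (k-1)` is the `k`-th term `γ_k(G)` of the lower central
series; here `γ_{k+1}(G) = (⊤ : Subgroup G).lowerCentralSeries k`. -/
theorem stmt_7 {G : Type*} [Group G] (n : ℕ) (x : Fin n → G)
    (hgen : Subgroup.closure (Set.range x) = ⊤)
    (h : ∀ g : G, ∃ H : Subgroup G, (H : Set G) = twistedClass g)
    (k : ℕ) (s : ℕ) (hs : 1 ≤ s) (hfam : Fin s → G)
    (hγk : (((⊤ : Subgroup G).lowerCentralSeries k : Subgroup G) : Set G) =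
      (List.ofFn fun j : Fin s => twistedClass (hfam j)).prod) :
    (((⊤ : Subgroup G).lowerCentralSeries (k + 1) : Subgroup G) : Set G) =
      (List.ofFn fun i : Fin n =>
        (List.ofFn fun j : Fin s => twistedClass ⁅x i, hfam j⁆).prod).prod := by
  classical
  -- every set in the outer list is the carrier of a normal subgroup
  have hL : ∀ S ∈ (List.ofFn fun i : Fin n =>
      (List.ofFn fun j : Fin s => twistedClass ⁅x i, hfam j⁆).prod),
      ∃ H : Subgroup G, H.Normal ∧ (H : Set G) = S := by
    intro S hS
    rw [List.mem_ofFn] at hS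
    obtain ⟨i, rfl⟩ := hS
    have hin : ∀ S' ∈ (List.ofFn fun j : Fin s => twistedClass ⁅x i, hfam j⁆),
        ∃ H : Subgroup G, H.Normal ∧ (H : Set G) = S' := by
      intro S' hS'
      rw [List.mem_ofFn] at hS'
      obtain ⟨j, rfl⟩ := hS'
      obtain ⟨H, hH⟩ := h ⁅x i, hfam j⁆
      exact ⟨H, tc_normal hH, hH⟩
    obtain ⟨N, hNn, hNT, _, _⟩ := listProd_subgroup hin
    exact ⟨N, hNn, hNT⟩
  obtain ⟨N, hNn, hNeq, hNsub, hNmin⟩ := listProd_subgroup hL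
  -- twisted classes of the pair commutators lie in N
  have key : ∀ (i : Fin n) (j : Fin s), twistedClass ⁅x i, hfam j⁆ ⊆ (N : Set G) := by
    intro i j
    have h1 : twistedClass ⁅x i, hfam j⁆ ⊆
        (List.ofFn fun j' : Fin s => twistedClass ⁅x i, hfam j'⁆).prod := by
      apply subset_listProd
      · intro S hS
        rw [List.mem_ofFn] at hS
        obtain ⟨j', rfl⟩ := hS
        exact tc_one_mem _
      · rw [List.mem_ofFn]; exact ⟨j, rfl⟩
    refine h1.trans (hNsub _ ?_)
    rw [List.mem_ofFn]; exact ⟨i, rfl⟩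
  have keymem : ∀ (i : Fin n) (j : Fin s) (z : G), ⁅z, ⁅x i, hfam j⁆⁆ ∈ N := by
    intro i j z
    exact key i j ⟨z, rfl⟩
  -- "central modulo N"
  set Cent : G → Prop := fun g => ∀ z : G, ⁅z, g⁆ ∈ N with hCent
  have cent_one : Cent 1 := by
    intro z
    have h0 : ⁅z, (1 : G)⁆ = 1 := by simp
    rw [h0]; exact N.one_mem
  have cent_mul : ∀ a b, Cent a → Cent b → Cent (a * b) := by
    intro a b ha hb z
    have : ⁅z, a * b⁆ = ⁅z, a⁆ * (a * ⁅z, b⁆ * a⁻¹) := by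
      simp only [commutatorElement_def]; group
    rw [this]
    exact N.mul_mem (ha z) (hNn.conj_mem _ (hb z) a)
  have cent_inv : ∀ a, Cent a → Cent a⁻¹ := by
    intro a ha z
    have : ⁅z, a⁻¹⁆ = a⁻¹ * ⁅z, a⁆⁻¹ * a := by
      simp only [commutatorElement_def]; group
    rw [this]
    have : ⁅z, a⁆⁻¹ ∈ N := N.inv_mem (ha z)
    have := hNn.conj_mem _ this a⁻¹
    simpa using this
  have cent_conj : ∀ a c, Cent c → Cent (a * c * a⁻¹) := by
    intro a c hc z
    have : ⁅z, a * c * a⁻¹⁆ = a * ⁅a⁻¹ * z * a, c⁆ * a⁻¹ := by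
      simp only [commutatorElement_def]; group
    rw [this]
    exact hNn.conj_mem _ (hc _) a
  -- all commutators ⁅g, hfam j⁆ are central mod N
  have cent_comm : ∀ (j : Fin s) (g : G), Cent ⁅g, hfam j⁆ := by
    intro j g
    have hg : g ∈ Subgroup.closure (Set.range x) := by rw [hgen]; exact Subgroup.mem_top g
    refine Subgroup.closure_induction (p := fun g _ => Cent ⁅g, hfam j⁆) ?_ ?_ ?_ ?_ hg
    · rintro _ ⟨i, rfl⟩
      exact keymem i j
    · show Cent ⁅(1 : G), hfam j⁆
      have h0 : ⁅(1 : G), hfam j⁆ = 1 := by simp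
      rw [h0]; exact cent_one
    · intro a b _ _ ha hb
      have : ⁅a * b, hfam j⁆ = (a * ⁅b, hfam j⁆ * a⁻¹) * ⁅a, hfam j⁆ := by
        simp only [commutatorElement_def]; group
      rw [this]
      exact cent_mul _ _ (cent_conj _ _ hb) ha
    · intro a _ ha
      have : ⁅a⁻¹, hfam j⁆ = a⁻¹ * ⁅a, hfam j⁆⁻¹ * a := by
        simp only [commutatorElement_def]; group
      rw [this]
      have h1 : Cent ⁅a, hfam j⁆⁻¹ := cent_inv _ ha
      have := cent_conj a⁻¹ _ h1
      simpa using this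
  -- all elements of γ_k are central mod N
  have cent_gamma : ∀ a ∈ (⊤ : Subgroup G).lowerCentralSeries k, Cent a := by
    intro a ha
    have ha' : a ∈ (((⊤ : Subgroup G).lowerCentralSeries k : Subgroup G) : Set G) := ha
    rw [hγk] at ha'
    refine listProd_pred cent_mul cent_one ?_ a ha'
    intro S hS y hy
    rw [List.mem_ofFn] at hS
    obtain ⟨j, rfl⟩ := hS
    obtain ⟨z, rfl⟩ := hy
    exact cent_comm j z
  -- main subgroup equality
  have main : (⊤ : Subgroup G).lowerCentralSeries (k + 1) = N := by
    apply le_antisymm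
    · rw [lcs_succ_eq]
      rw [Subgroup.commutator_le]
      intro a ha g _
      have := cent_gamma a ha g
      have h2 : ⁅a, g⁆ = ⁅g, a⁆⁻¹ := (commutatorElement_inv g a).symm
      rw [h2]
      exact N.inv_mem this
    · apply hNmin
      intro S hS
      rw [List.mem_ofFn] at hS
      obtain ⟨i, rfl⟩ := hS
      intro a ha
      refine listProd_pred (L := List.ofFn fun j : Fin s => twistedClass ⁅x i, hfam j⁆)
        (P := fun a => a ∈ (((⊤ : Subgroup G).lowerCentralSeries (k + 1) : Subgroup G) : Set G))
        (fun a b ha hb => Subgroup.mul_mem _ ha hb) (Subgroup.one_mem _) ?_ a ha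
      intro S hS y hy
      rw [List.mem_ofFn] at hS
      obtain ⟨j, rfl⟩ := hS
      obtain ⟨z, rfl⟩ := hy
      -- z-commutator with p_ij, where p_ij ∈ γ_k
      have hp : ⁅x i, hfam j⁆ ∈ (⊤ : Subgroup G).lowerCentralSeries k := by
        have h1 : twistedClass (hfam j) ⊆
            (List.ofFn fun j' : Fin s => twistedClass (hfam j')).prod := by
          apply subset_listProd
          · intro S hS
            rw [List.mem_ofFn] at hS
            obtain ⟨j', rfl⟩ := hS
            exact tc_one_mem _
          · rw [List.mem_ofFn]; exact ⟨j, rfl⟩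
        have : ⁅x i, hfam j⁆ ∈ (((⊤ : Subgroup G).lowerCentralSeries k : Subgroup G) : Set G) := by
          rw [hγk]; exact h1 ⟨x i, rfl⟩
        exact this
      have h1 : ⁅⁅x i, hfam j⁆, z⁆ ∈ (⊤ : Subgroup G).lowerCentralSeries (k + 1) := by
        rw [lcs_succ_eq]
        exact Subgroup.commutator_mem_commutator hp (Subgroup.mem_top z)
      have h2 : ⁅z, ⁅x i, hfam j⁆⁆ = ⁅⁅x i, hfam j⁆, z⁆⁻¹ :=
        (commutatorElement_inv _ _).symm
      show ⁅z, ⁅x i, hfam j⁆⁆ ∈ (⊤ : Subgroup G).lowerCentralSeries (k + 1)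
      rw [h2]
      exact Subgroup.inv_mem _ h1
  rw [main, hNeq]
end

section
/- Let G be a group generated by n elements (n ≥ 2) such that for every g in G the twisted conjugacy class [e]_g = {[x,g] : x ∈ G} is a subgroup of G. Then for every k ≥ 3, every element of γ_k(G) is a product of at most n^{k−2}(n−1)/2 elements, each of which is a left-normed commutator [g₁, g₂, …, g_k] of weight k (with g₁,…,g_k ∈ G) or the inverse of such a commutator. -/
open scoped commutatorElement

/-- The left-normed iterated commutator: `leftNormed g k = [g 0, g 1, …, g k]`,
a commutator of weight `k + 1`. -/
def leftNormed {G : Type*} [Group G] (g : ℕ → G) : ℕ → G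
  | 0 => g 0
  | k + 1 => ⁅leftNormed g k, g (k + 1)⁆

namespace Stmt9Aux

open Pointwise

variable {G : Type*} [Group G]

lemma leftNormed_congr (c c' : ℕ → G) : ∀ k, (∀ i ≤ k, c i = c' i) →
    leftNormed c k = leftNormed c' k
  | 0, h => by simp [leftNormed, h 0 le_rfl]
  | k+1, h => by
    rw [leftNormed, leftNormed,
      leftNormed_congr c c' k (fun i hi => h i (hi.trans (Nat.le_succ k))), h (k+1) le_rfl]

section
variable (N : G → Subgroup G) (hN : ∀ g : G, (N g : Set G) = twistedClass g)
include hN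

lemma mem_N_iff {a g : G} : a ∈ N g ↔ ∃ x : G, a = ⁅x, g⁆ := by
  rw [← SetLike.mem_coe, hN g]; exact Iff.rfl

lemma comm_mem (x g : G) : ⁅x, g⁆ ∈ N g := (mem_N_iff N hN).2 ⟨x, rfl⟩

lemma comm_mem' (g y : G) : ⁅g, y⁆ ∈ N g := by
  rw [← commutatorElement_inv]
  exact (N g).inv_mem (comm_mem N hN y g)

lemma N_normal (g : G) : (N g).Normal := by
  constructor
  intro a ha z
  obtain ⟨x, rfl⟩ := (mem_N_iff N hN).1 ha
  have hid : z * ⁅x, g⁆ * z⁻¹ = ⁅z * x, g⁆ * ⁅z, g⁆⁻¹ := by group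
  rw [hid]
  exact mul_mem (comm_mem N hN _ _) (inv_mem (comm_mem N hN _ _))

lemma mem_N_iff' {a g : G} : a ∈ N g ↔ ∃ y : G, a = ⁅g, y⁆ := by
  constructor
  · intro ha
    obtain ⟨x, hx⟩ := (mem_N_iff N hN).1 ((N g).inv_mem ha)
    exact ⟨x, by rw [← inv_inv a, hx, commutatorElement_inv]⟩
  · rintro ⟨y, rfl⟩; exact comm_mem' N hN g y

end

/-- `D P = {a | ∀ g, ⁅a,g⁆ ∈ P}`, a subgroup when `P` is normal. -/
def D (P : Subgroup G) (hP : P.Normal) : Subgroup G where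
  carrier := {a | ∀ g, ⁅a, g⁆ ∈ P}
  one_mem' := by
    intro g
    have : ⁅(1:G), g⁆ = 1 := by group
    show ⁅(1:G), g⁆ ∈ P
    rw [this]; exact P.one_mem
  mul_mem' := by
    intro a b ha hb g
    have hid : ⁅a * b, g⁆ = a * ⁅b, g⁆ * a⁻¹ * ⁅a, g⁆ := by group
    rw [hid]
    exact mul_mem (hP.conj_mem _ (hb g) a) (ha g)
  inv_mem' := by
    intro a ha g
    have hid : ⁅a⁻¹, g⁆ = a⁻¹ * ⁅a, g⁆⁻¹ * a := by group
    rw [hid]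
    simpa using hP.conj_mem _ (inv_mem (ha g)) a⁻¹

lemma mem_D_iff {P : Subgroup G} {hP : P.Normal} {a : G} :
    a ∈ D P hP ↔ ∀ g, ⁅a, g⁆ ∈ P := Iff.rfl

lemma D_normal (P : Subgroup G) (hP : P.Normal) : (D P hP).Normal := by
  constructor
  intro a ha z
  rw [mem_D_iff]
  intro g
  have hid : ⁅z * a * z⁻¹, g⁆ = z * ⁅a, z⁻¹ * g * z⁆ * z⁻¹ := by group
  rw [hid]
  exact hP.conj_mem _ (ha _) z

/-- `E P c = {y | ⁅c,y⁆ ∈ D P}`. -/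
def E (P : Subgroup G) (hP : P.Normal) (c : G) : Subgroup G where
  carrier := {y | ⁅c, y⁆ ∈ D P hP}
  one_mem' := by
    have : ⁅c, (1:G)⁆ = 1 := by group
    simp only [Set.mem_setOf_eq, this]
    exact (D P hP).one_mem
  mul_mem' := by
    intro y z hy hz
    have hid : ⁅c, y * z⁆ = ⁅c, y⁆ * (y * ⁅c, z⁆ * y⁻¹) := by group
    rw [Set.mem_setOf_eq, hid]
    exact mul_mem hy ((D_normal P hP).conj_mem _ hz y)
  inv_mem' := by
    intro y hy
    have hid : ⁅c, y⁻¹⁆ = y⁻¹ * ⁅c, y⁆⁻¹ * y := by group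
    rw [Set.mem_setOf_eq, hid]
    simpa using (D_normal P hP).conj_mem _ (inv_mem hy) y⁻¹

lemma mem_E_iff {P : Subgroup G} {hP : P.Normal} {c y : G} :
    y ∈ E P hP c ↔ ⁅c, y⁆ ∈ D P hP := Iff.rfl




def supN (N : G → Subgroup G) : List G → Subgroup G
  | [] => ⊥
  | c :: T => N c ⊔ supN N T

lemma supN_normal (N : G → Subgroup G) (hnorm : ∀ g, (N g).Normal) :
    ∀ T : List G, (supN N T).Normal
  | [] => show (⊥ : Subgroup G).Normal from inferInstance
  | c :: T => by
    haveI := hnorm c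
    haveI := supN_normal N hnorm T
    exact Subgroup.sup_normal _ _

lemma N_le_supN (N : G → Subgroup G) {c : G} : ∀ {T : List G}, c ∈ T → N c ≤ supN N T
  | [], h => by simp at h
  | d :: T, h => by
    rcases List.mem_cons.1 h with h | h
    · subst h; exact le_sup_left
    · exact (N_le_supN N h).trans le_sup_right

lemma supN_le (N : G → Subgroup G) {K : Subgroup G} :
    ∀ {T : List G}, (∀ c ∈ T, N c ≤ K) → supN N T ≤ K
  | [], _ => bot_le
  | c :: T, h => sup_le (h c (List.mem_cons_self))
      (supN_le N fun d hd => h d (List.mem_cons_of_mem c hd))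

lemma mem_supN_prod (N : G → Subgroup G) (hnorm : ∀ g, (N g).Normal) :
    ∀ (T : List G) (g : G), g ∈ supN N T → ∃ ws : List G,
      ws.length = T.length ∧ (∀ w ∈ ws, ∃ c ∈ T, w ∈ N c) ∧ ws.prod = g
  | [], g, hg => by
    have hg1 : g = 1 := by simpa [supN, Subgroup.mem_bot] using hg
    exact ⟨[], rfl, by simp, by simp [hg1]⟩
  | c :: T, g, hg => by
    haveI := supN_normal N hnorm T
    have h2 : g ∈ ((N c : Set G) * (supN N T : Set G)) := by
      rw [← Subgroup.mul_normal]
      exact hg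
    obtain ⟨w, hw, r, hr, rfl⟩ := h2
    obtain ⟨ws, hlen, hmem, hprod⟩ := mem_supN_prod N hnorm T r hr
    exact ⟨w :: ws, by simp [hlen], by
      intro v hv
      rcases List.mem_cons.1 hv with rfl | hv
      · exact ⟨c, List.mem_cons_self, hw⟩
      · obtain ⟨d, hd, hvd⟩ := hmem v hv
        exact ⟨d, List.mem_cons_of_mem c hd, hvd⟩, by simp [hprod]⟩

lemma lcs_succ_le (m : ℕ) (Q : Subgroup G)
    (hs : ∀ p ∈ (⊤ : Subgroup G).lowerCentralSeries m, ∀ q : G, ⁅p, q⁆ ∈ Q) :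
    (⊤ : Subgroup G).lowerCentralSeries (m + 1) ≤ Q := by
  rw [Subgroup.lowerCentralSeries_succ, Subgroup.commutator_def]
  rw [Subgroup.closure_le]
  rintro y ⟨p, hp, q, -, rfl⟩
  simpa [commutatorElement_def] using hs p hp q





def genFun {n : ℕ} (x : Fin n → G) : ℕ → G := fun i => if h : i < n then x ⟨i, h⟩ else 1

lemma genFun_coe {n : ℕ} (x : Fin n → G) (i : Fin n) : genFun x (i : ℕ) = x i := by
  simp [genFun, i.isLt]

def baseList {n : ℕ} (x : Fin n → G) : List G :=
  (List.range n).flatMap fun i => (List.range i).map fun j => ⁅genFun x i, genFun x j⁆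

lemma sum_range_id (n : ℕ) : (List.range n).sum * 2 = n * (n - 1) := by
  induction n with
  | zero => simp
  | succ j ih =>
    rw [List.range_succ, List.sum_append, List.sum_cons, List.sum_nil, Nat.add_zero, Nat.add_mul, ih]
    cases j with
    | zero => simp
    | succ i =>
      simp only [Nat.succ_sub_one]
      ring

lemma baseList_length {n : ℕ} (x : Fin n → G) : (baseList x).length * 2 = n * (n - 1) := by
  have : (baseList x).length = (List.range n).sum := by
    simp [baseList, List.length_flatMap, Function.comp_def]
  rw [this, sum_range_id]

lemma mem_baseList {n : ℕ} (x : Fin n → G) (i j : Fin n) (hij : (j : ℕ) < (i : ℕ)) :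
    ⁅x i, x j⁆ ∈ baseList x := by
  rw [← genFun_coe x i, ← genFun_coe x j]
  exact List.mem_flatMap.2 ⟨(i : ℕ), List.mem_range.2 i.isLt,
    List.mem_map.2 ⟨(j : ℕ), List.mem_range.2 hij, rfl⟩⟩

lemma baseList_mem {n : ℕ} (x : Fin n → G) (c : G) (hc : c ∈ baseList x) :
    ∃ i j : ℕ, c = ⁅genFun x i, genFun x j⁆ := by
  obtain ⟨i, -, hc⟩ := List.mem_flatMap.1 hc
  obtain ⟨j, -, rfl⟩ := List.mem_map.1 hc
  exact ⟨i, j, rfl⟩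

def stepList {n : ℕ} (x : Fin n → G) (T : List G) : List G :=
  T.flatMap fun c => (List.range n).map fun i => ⁅c, genFun x i⁆

lemma stepList_length {n : ℕ} (x : Fin n → G) : ∀ T : List G,
    (stepList x T).length = T.length * n
  | [] => by simp [stepList]
  | c :: T => by
    have ih := stepList_length x T
    simp only [stepList, List.flatMap_cons, List.length_append, List.length_map,
      List.length_range, List.length_cons] at *
    rw [ih]; ring

lemma mem_stepList {n : ℕ} (x : Fin n → G) (T : List G) (c : G) (hc : c ∈ T) (i : Fin n) :
    ⁅c, x i⁆ ∈ stepList x T := by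
  rw [← genFun_coe x i]
  exact List.mem_flatMap.2 ⟨c, hc, List.mem_map.2 ⟨(i : ℕ), List.mem_range.2 i.isLt, rfl⟩⟩

lemma stepList_mem {n : ℕ} (x : Fin n → G) (T : List G) (w : G) (hw : w ∈ stepList x T) :
    ∃ c ∈ T, ∃ i : ℕ, w = ⁅c, genFun x i⁆ := by
  obtain ⟨c, hc, hw⟩ := List.mem_flatMap.1 hw
  obtain ⟨i, -, rfl⟩ := List.mem_map.1 hw
  exact ⟨c, hc, i, rfl⟩


section Main
variable (N : G → Subgroup G) (hN : ∀ g : G, (N g : Set G) = twistedClass g)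
include hN

lemma main_induction {n : ℕ} (x : Fin n → G)
    (hgen : Subgroup.closure (Set.range x) = ⊤) :
    ∀ m : ℕ, 2 ≤ m → ∃ T : List G,
      T.length * 2 = n ^ (m - 1) * (n - 1) ∧
      (∀ c ∈ T, ∃ c' : ℕ → G, c = leftNormed c' (m - 1)) ∧
      (⊤ : Subgroup G).lowerCentralSeries m ≤ supN N T := by
  intro m hm
  induction m, hm using Nat.le_induction with
  | base =>
    refine ⟨baseList x, by simpa using baseList_length x, ?_, ?_⟩
    · intro c hc
      obtain ⟨i, j, rfl⟩ := baseList_mem x c hc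
      refine ⟨fun t => if t = 0 then genFun x i else genFun x j, ?_⟩
      show ⁅genFun x i, genFun x j⁆ = ⁅_, _⁆
      norm_num [leftNormed]
    · set P := supN N (baseList x) with hPdef
      have hPn : P.Normal := supN_normal N (N_normal N hN) _
      have hlt : ∀ i j : Fin n, (j : ℕ) < (i : ℕ) → ⁅x i, x j⁆ ∈ D P hPn := by
        intro i j hij
        rw [mem_D_iff]
        intro g
        exact N_le_supN N (mem_baseList x i j hij) (comm_mem' N hN _ g)
      have key1 : ∀ i j : Fin n, ⁅x i, x j⁆ ∈ D P hPn := by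
        intro i j
        rcases lt_trichotomy ((j : ℕ)) ((i : ℕ)) with hij | hij | hij
        · exact hlt i j hij
        · have : i = j := Fin.ext hij.symm
          subst this
          have h1 : ⁅x i, x i⁆ = 1 := by group
          rw [h1]; exact (D P hPn).one_mem
        · have h1 : ⁅x i, x j⁆ = ⁅x j, x i⁆⁻¹ := (commutatorElement_inv (x j) (x i)).symm
          rw [h1]
          exact inv_mem (hlt j i hij)
      have key2 : ∀ i : Fin n, ∀ v : G, ⁅x i, v⁆ ∈ D P hPn := by
        intro i v
        have hE : Subgroup.closure (Set.range x) ≤ E P hPn (x i) := by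
          rw [Subgroup.closure_le]
          rintro _ ⟨j, rfl⟩
          exact key1 i j
        rw [hgen] at hE
        exact (mem_E_iff).1 (hE (Subgroup.mem_top v))
      have key3 : ∀ u v : G, ⁅u, v⁆ ∈ D P hPn := by
        intro u v
        have hD : Subgroup.closure (Set.range x) ≤ D (D P hPn) (D_normal P hPn) := by
          rw [Subgroup.closure_le]
          rintro _ ⟨i, rfl⟩
          exact fun w => key2 i w
        rw [hgen] at hD
        exact (mem_D_iff).1 (hD (Subgroup.mem_top u)) v
      have hlcs1 : (⊤ : Subgroup G).lowerCentralSeries 1 ≤ D P hPn :=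
        lcs_succ_le 0 (D P hPn) fun p _ q => key3 p q
      exact lcs_succ_le 1 P fun p hp q => (mem_D_iff).1 (hlcs1 hp) q
  | succ m hm ih =>
    obtain ⟨T, hlen, hwt, hincl⟩ := ih
    refine ⟨stepList x T, ?_, ?_, ?_⟩
    · have hpow : n ^ (m - 1) * n = n ^ m := by
        have h1 : m - 1 + 1 = m := by omega
        conv_rhs => rw [← h1]
        rw [pow_succ]
      have h2 : m + 1 - 1 = m := by omega
      rw [h2]
      calc (stepList x T).length * 2 = T.length * n * 2 := by rw [stepList_length]
        _ = T.length * 2 * n := by ring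
        _ = n ^ (m - 1) * (n - 1) * n := by rw [hlen]
        _ = n ^ (m - 1) * n * (n - 1) := by ring
        _ = n ^ m * (n - 1) := by rw [hpow]
    · intro w hw
      obtain ⟨c, hc, i, rfl⟩ := stepList_mem x T w hw
      obtain ⟨c', hc'⟩ := hwt c hc
      refine ⟨fun t => if t = m then genFun x i else c' t, ?_⟩
      set e : ℕ → G := fun t => if t = m then genFun x i else c' t with he
      have hm1 : m - 1 + 1 = m := by omega
      have h1 : leftNormed e (m - 1 + 1) = ⁅leftNormed e (m - 1), e (m - 1 + 1)⁆ := rfl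
      have h2 : e (m - 1 + 1) = genFun x i := by
        rw [he]; simp only []; rw [if_pos hm1]
      have h3 : leftNormed e (m - 1) = leftNormed c' (m - 1) := by
        refine leftNormed_congr e c' (m - 1) ?_
        intro t ht
        rw [he]; simp only []; rw [if_neg (by omega)]
      rw [h2, h3, ← hc'] at h1
      have h4 : m + 1 - 1 = m - 1 + 1 := by omega
      rw [h4, h1]
    · set P' := supN N (stepList x T) with hP'def
      have hP'n : P'.Normal := supN_normal N (N_normal N hN) _
      have hstep : supN N T ≤ D P' hP'n := by
        refine supN_le N ?_
        intro c hc a ha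
        obtain ⟨y, rfl⟩ := (mem_N_iff' N hN).1 ha
        have hE : Subgroup.closure (Set.range x) ≤ E P' hP'n c := by
          rw [Subgroup.closure_le]
          rintro _ ⟨j, rfl⟩
          show ⁅c, x j⁆ ∈ D P' hP'n
          rw [mem_D_iff]
          intro g
          exact N_le_supN N (mem_stepList x T c hc j) (comm_mem' N hN _ g)
        rw [hgen] at hE
        exact (mem_E_iff).1 (hE (Subgroup.mem_top y))
      exact lcs_succ_le m P' fun p hp q => (mem_D_iff).1 (hstep (hincl hp)) q

end Main

end Stmt9Aux

open Stmt9Aux in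
theorem stmt_9 {G : Type*} [Group G] (n : ℕ) (hn : 2 ≤ n) (x : Fin n → G)
    (hgen : Subgroup.closure (Set.range x) = ⊤)
    (h : ∀ g : G, ∃ H : Subgroup G, (H : Set G) = twistedClass g)
    (k : ℕ) (hk : 3 ≤ k) :
    ∀ g ∈ (⊤ : Subgroup G).lowerCentralSeries (k - 1), ∃ l : List G,
      l.length ≤ n ^ (k - 2) * (n - 1) / 2 ∧
      (∀ y ∈ l, ∃ c : ℕ → G, y = leftNormed c (k - 1) ∨ y = (leftNormed c (k - 1))⁻¹) ∧
      l.prod = g := by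
  choose N hN using h
  obtain ⟨T, hlen, hwt, hincl⟩ := main_induction N hN x hgen (k - 1) (by omega)
  intro g hg
  obtain ⟨ws, hwslen, hwsmem, hwsprod⟩ :=
    mem_supN_prod N (N_normal N hN) T g (hincl hg)
  have hexp : k - 1 - 1 = k - 2 := by omega
  rw [hexp] at hlen hwt
  refine ⟨ws, by omega, ?_, hwsprod⟩
  intro y hy
  obtain ⟨c, hcT, hyc⟩ := hwsmem y hy
  obtain ⟨c', hc'⟩ := hwt c hcT
  obtain ⟨z, hz⟩ := (mem_N_iff N hN).1 hyc
  refine ⟨fun t => if t = k - 1 then z else c' t, Or.inr ?_⟩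
  set e : ℕ → G := fun t => if t = k - 1 then z else c' t with he
  have hk1 : k - 2 + 1 = k - 1 := by omega
  have h1 : leftNormed e (k - 2 + 1) = ⁅leftNormed e (k - 2), e (k - 2 + 1)⁆ := rfl
  have h2 : e (k - 2 + 1) = z := by rw [he]; simp only []; rw [if_pos hk1]
  have h3 : leftNormed e (k - 2) = leftNormed c' (k - 2) := by
    refine leftNormed_congr e c' (k - 2) ?_
    intro t ht
    rw [he]; simp only []; rw [if_neg (by omega)]
  rw [h2, h3, ← hc', hk1] at h1
  rw [hz, h1, commutatorElement_inv]
end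

section
/- Let G be a metabelian group (i.e. [G,G] is abelian) generated by n elements (n ≥ 2) such that for every g in G the twisted conjugacy class [e]_g = {[x,g] : x ∈ G} is a subgroup of G. Then for every k ≥ 1, every element of γ_{k+2}(G) is a product of at most (n(n−1)/2)·C(n+k−2, k−1) elements, each of which is a left-normed commutator [g₁, …, g_{k+2}] of weight k+2 (with g₁,…,g_{k+2} ∈ G) or the inverse of such a commutator, where C(n+k−2, k−1) denotes the binomial coefficient. -/
open scoped commutatorElement

namespace TCAux

variable {G : Type*} [Group G]

/-- iterated commutator of `u` with the entries of a list -/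
def app (u : G) (l : List G) : G := l.foldl (fun v y => ⁅v, y⁆) u

@[simp] lemma app_nil (u : G) : app u [] = u := rfl

@[simp] lemma app_cons (u a : G) (l : List G) : app u (a :: l) = app ⁅u, a⁆ l := rfl

lemma app_append (u : G) (l₁ l₂ : List G) : app u (l₁ ++ l₂) = app (app u l₁) l₂ :=
  List.foldl_append

lemma mem_M (a b : G) : ⁅a, b⁆ ∈ commutator G :=
  Subgroup.commutator_mem_commutator (Subgroup.mem_top a) (Subgroup.mem_top b)

lemma conj_mem_M {a : G} (ha : a ∈ commutator G) (g : G) : g * a * g⁻¹ ∈ commutator G :=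
  (Subgroup.commutator_normal ⊤ ⊤).conj_mem a ha g

lemma app_mem {u : G} (hu : u ∈ commutator G) (l : List G) : app u l ∈ commutator G := by
  induction l generalizing u with
  | nil => exact hu
  | cons a l ih => exact ih (mem_M _ _)

lemma app_one (l : List G) : app (1 : G) l = 1 := by
  induction l with
  | nil => rfl
  | cons a l ih => rw [app_cons, commutatorElement_one_left]; exact ih

section Meta

variable (hmeta : ∀ a ∈ commutator G, ∀ b ∈ commutator G, a * b = b * a)
include hmeta

lemma conj_eq {a z : G} (ha : a ∈ commutator G) (hz : z ∈ commutator G) :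
    a * z * a⁻¹ = z := by
  rw [hmeta a ha z hz]; group

lemma comm_mul {a : G} (ha : a ∈ commutator G) (b y : G) :
    ⁅a * b, y⁆ = ⁅a, y⁆ * ⁅b, y⁆ := by
  have h1 : ⁅a * b, y⁆ = a * ⁅b, y⁆ * a⁻¹ * ⁅a, y⁆ := by
    simp only [commutatorElement_def]; group
  rw [h1, conj_eq hmeta ha (mem_M b y)]
  exact hmeta _ (mem_M b y) _ (mem_M a y)

lemma comm_inv {a : G} (ha : a ∈ commutator G) (y : G) : ⁅a⁻¹, y⁆ = ⁅a, y⁆⁻¹ := by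
  have h : ⁅a, y⁆ * ⁅a⁻¹, y⁆ = 1 := by
    rw [← comm_mul hmeta ha a⁻¹ y]; simp
  exact (inv_eq_of_mul_eq_one_right h).symm

lemma comm_absorb {m d : G} (hm : m ∈ commutator G) (hd : d ∈ commutator G) (y : G) :
    ⁅m, y * d⁆ = ⁅m, y⁆ := by
  have hcomm : d * m⁻¹ * d⁻¹ = m⁻¹ := conj_eq hmeta hd (inv_mem hm)
  calc ⁅m, y * d⁆ = m * y * (d * m⁻¹ * d⁻¹) * y⁻¹ := by
        simp only [commutatorElement_def]; group
    _ = m * y * m⁻¹ * y⁻¹ := by rw [hcomm]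
    _ = ⁅m, y⁆ := by rw [commutatorElement_def]

lemma comm_swap {u : G} (hu : u ∈ commutator G) (a b : G) :
    ⁅⁅u, a⁆, b⁆ = ⁅⁅u, b⁆, a⁆ := by
  have h5 : b⁻¹ * a⁻¹ * b * a ∈ commutator G := by
    have := mem_M (b⁻¹ : G) (a⁻¹ : G)
    simpa [commutatorElement_def, mul_assoc] using this
  have h6 : ⁅u⁻¹, b * (b⁻¹ * a⁻¹ * b * a)⁆ = ⁅u⁻¹, b⁆ := comm_absorb hmeta (inv_mem hu) h5 b
  have h4 : b * (b⁻¹ * a⁻¹ * b * a) = a⁻¹ * b * a := by group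
  have h7 : ⁅u⁻¹, b⁆ = ⁅u, b⁆⁻¹ := comm_inv hmeta hu b
  have h3 : ⁅a * u⁻¹ * a⁻¹, b⁆ = a * ⁅u⁻¹, a⁻¹ * b * a⁆ * a⁻¹ := by
    simp only [commutatorElement_def]; group
  have h2 : ⁅u * (a * u⁻¹ * a⁻¹), b⁆ = ⁅u, b⁆ * ⁅a * u⁻¹ * a⁻¹, b⁆ :=
    comm_mul hmeta hu _ b
  have h1 : ⁅u, a⁆ = u * (a * u⁻¹ * a⁻¹) := by
    simp only [commutatorElement_def]; group
  calc ⁅⁅u, a⁆, b⁆ = ⁅u * (a * u⁻¹ * a⁻¹), b⁆ := by rw [← h1]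
    _ = ⁅u, b⁆ * ⁅a * u⁻¹ * a⁻¹, b⁆ := h2
    _ = ⁅u, b⁆ * (a * ⁅u⁻¹, a⁻¹ * b * a⁆ * a⁻¹) := by rw [h3]
    _ = ⁅u, b⁆ * (a * ⁅u, b⁆⁻¹ * a⁻¹) := by rw [← h4, h6, h7]
    _ = ⁅⁅u, b⁆, a⁆ := by simp only [commutatorElement_def]; group

lemma app_mul {u : G} (hu : u ∈ commutator G) (v : G) (l : List G) :
    app (u * v) l = app u l * app v l := by
  induction l generalizing u v with
  | nil => rfl
  | cons a l ih => rw [app_cons, comm_mul hmeta hu v a, ih (mem_M u a)]; rfl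

lemma app_inv {u : G} (hu : u ∈ commutator G) (l : List G) :
    app u⁻¹ l = (app u l)⁻¹ := by
  induction l generalizing u with
  | nil => rfl
  | cons a l ih => rw [app_cons, comm_inv hmeta hu a, ih (mem_M u a)]; rfl

lemma comm_conj {u : G} (hu : u ∈ commutator G) (g y : G) :
    ⁅g * u * g⁻¹, y⁆ = g * ⁅u, y⁆ * g⁻¹ := by
  have hd : y⁻¹ * g * y * g⁻¹ ∈ commutator G := by
    have := mem_M (y⁻¹ : G) (g : G)
    simpa [commutatorElement_def, mul_assoc] using this
  have h1 : ⁅g * u * g⁻¹, y * (y⁻¹ * g * y * g⁻¹)⁆ = ⁅g * u * g⁻¹, y⁆ :=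
    comm_absorb hmeta (conj_mem_M hu g) hd y
  have h2 : y * (y⁻¹ * g * y * g⁻¹) = g * y * g⁻¹ := by group
  have h3 : ⁅g * u * g⁻¹, g * y * g⁻¹⁆ = g * ⁅u, y⁆ * g⁻¹ := by
    simp only [commutatorElement_def]; group
  rw [← h1, h2, h3]

lemma app_conj {u : G} (hu : u ∈ commutator G) (g : G) (l : List G) :
    app (g * u * g⁻¹) l = g * app u l * g⁻¹ := by
  induction l generalizing u with
  | nil => rfl
  | cons a l ih => rw [app_cons, comm_conj hmeta hu g a, ih (mem_M u a), app_cons]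

lemma app_perm {l₁ l₂ : List G} (p : l₁.Perm l₂) {u : G} (hu : u ∈ commutator G) :
    app u l₁ = app u l₂ := by
  induction p generalizing u with
  | nil => rfl
  | cons a p ih => rw [app_cons, app_cons]; exact ih (mem_M u a)
  | swap a b l => rw [app_cons, app_cons, app_cons, app_cons, comm_swap hmeta hu]
  | trans p q ih1 ih2 => exact (ih1 hu).trans (ih2 hu)

lemma comm_list_prod (l : List G) (hl : ∀ y ∈ l, y ∈ commutator G) (z : G) :
    ⁅l.prod, z⁆ = (l.map (fun y => ⁅y, z⁆)).prod := by
  induction l with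
  | nil => simp
  | cons a l ih =>
    rw [List.prod_cons, comm_mul hmeta (hl a (List.mem_cons_self)) _ z, List.map_cons,
      List.prod_cons, ih (fun y hy => hl y (List.mem_cons_of_mem a hy))]

end Meta

end TCAux

namespace TCAux

variable {G : Type*} [Group G]

section Gen

variable {n : ℕ} (x : Fin n → G)

/-- conjugated basic commutator -/
def bse (i j : Fin n) (w : G) (b : Bool) : G :=
  w * (cond b ⁅x i, x j⁆ ⁅x i, x j⁆⁻¹) * w⁻¹

lemma bse_mem (i j : Fin n) (w : G) (b : Bool) : bse x i j w b ∈ commutator G := by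
  cases b <;> simp only [bse, Bool.cond_true, Bool.cond_false] <;>
    exact conj_mem_M (by first | exact inv_mem (mem_M _ _) | exact mem_M _ _) w

lemma bse_inv (i j : Fin n) (w : G) (b : Bool) : (bse x i j w b)⁻¹ = bse x i j w (!b) := by
  cases b <;> simp only [bse, Bool.not_true, Bool.not_false, Bool.cond_true, Bool.cond_false] <;> group

lemma bse_conj (i j : Fin n) (w : G) (b : Bool) (g : G) :
    g * bse x i j w b * g⁻¹ = bse x i j (g * w) b := by
  simp only [bse]; group

/-- The set of conjugated basic commutators of weight 2 with a tail of `k` generators. -/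
def Tset (k : ℕ) : Set G :=
  {y | ∃ i j : Fin n, j < i ∧ ∃ (w : G) (b : Bool) (L : List (Fin n)),
    L.length = k ∧ y = app (bse x i j w b) (L.map x)}

lemma Tset_subM {k : ℕ} {y : G} (hy : y ∈ Tset x k) : y ∈ commutator G := by
  obtain ⟨i, j, hji, w, b, L, hL, rfl⟩ := hy
  exact app_mem (bse_mem x i j w b) _

variable (hmeta : ∀ a ∈ commutator G, ∀ b ∈ commutator G, a * b = b * a)
include hmeta

lemma Tset_inv {k : ℕ} {y : G} (hy : y ∈ Tset x k) : y⁻¹ ∈ Tset x k := by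
  obtain ⟨i, j, hji, w, b, L, hL, rfl⟩ := hy
  exact ⟨i, j, hji, w, !b, L, hL, by
    rw [← app_inv hmeta (bse_mem x i j w b), bse_inv]⟩

lemma Tset_conj {k : ℕ} {y : G} (hy : y ∈ Tset x k) (g : G) : g * y * g⁻¹ ∈ Tset x k := by
  obtain ⟨i, j, hji, w, b, L, hL, rfl⟩ := hy
  exact ⟨i, j, hji, g * w, b, L, hL, by
    rw [← app_conj hmeta (bse_mem x i j w b), bse_conj]⟩

lemma Tset_succ {k : ℕ} {y : G} (hy : y ∈ Tset x k) (l : Fin n) :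
    ⁅y, x l⁆ ∈ Tset x (k + 1) := by
  obtain ⟨i, j, hji, w, b, L, hL, rfl⟩ := hy
  refine ⟨i, j, hji, w, b, L ++ [l], by simp [hL], ?_⟩
  rw [List.map_append, app_append]
  rfl

omit hmeta in
lemma closure_normal_of_conj {S : Set G} (hS : ∀ s ∈ S, ∀ g : G, g * s * g⁻¹ ∈ S) :
    (Subgroup.closure S).Normal := by
  constructor
  intro m hm g
  refine Subgroup.closure_induction
    (fun y hy => Subgroup.subset_closure (hS y hy g)) ?_ (fun y z _ _ hy hz => ?_)
    (fun y _ hy => ?_) hm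
  · simpa using Subgroup.one_mem (Subgroup.closure S)
  · have hh : g * (y * z) * g⁻¹ = (g * y * g⁻¹) * (g * z * g⁻¹) := by group
    rw [hh]; exact mul_mem hy hz
  · have hh : g * y⁻¹ * g⁻¹ = (g * y * g⁻¹)⁻¹ := by group
    rw [hh]; exact inv_mem hy

lemma Tclosure_normal (k : ℕ) : (Subgroup.closure (Tset x k)).Normal :=
  closure_normal_of_conj (fun s hs g => Tset_conj x hmeta hs g)

variable (hgen : Subgroup.closure (Set.range x) = ⊤)
include hgen

omit hmeta in
lemma mem_clx (g : G) : g ∈ Subgroup.closure (Set.range x) := hgen.symm ▸ Subgroup.mem_top g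

/-- Base case: the commutator subgroup is contained in the closure of `Tset x 0`. -/
lemma gen_zero : commutator G ≤ Subgroup.closure (Tset x 0) := by
  set N := Subgroup.closure (Tset x 0) with hN
  have hnormal : N.Normal := Tclosure_normal x hmeta 0
  have base : ∀ i j : Fin n, ⁅x i, x j⁆ ∈ N := by
    intro i j
    have mem_of_lt : ∀ i j : Fin n, j < i → ⁅x i, x j⁆ ∈ N := by
      intro i j hji
      refine Subgroup.subset_closure ⟨i, j, hji, 1, true, [], rfl, ?_⟩
      simp [bse, app]
    rcases lt_trichotomy j i with hlt | heq | hgt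
    · exact mem_of_lt i j hlt
    · rw [heq]; simp only [commutatorElement_self]; exact one_mem N
    · rw [← commutatorElement_inv]
      exact inv_mem (mem_of_lt j i hgt)
  have hcomm : ∀ a b : G, ⁅a, b⁆ ∈ N := by
    intro a b
    have hb := mem_clx x hgen b
    have ha := mem_clx x hgen a
    -- induction on a
    refine Subgroup.closure_induction (fun a' ha' => ?_) ?_
      (fun a₁ a₂ _ _ h1 h2 => ?_) (fun a' _ h1 => ?_) ha
    · -- a' in range x; induct on b
      obtain ⟨i, rfl⟩ := ha'
      refine Subgroup.closure_induction (fun b' hb' => ?_) ?_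
        (fun b₁ b₂ _ _ h1 h2 => ?_) (fun b' _ h1 => ?_) hb
      · obtain ⟨j, rfl⟩ := hb'; exact base i j
      · simp only [commutatorElement_one_right]; exact one_mem N
      · have hid : ⁅x i, b₁ * b₂⁆ = ⁅x i, b₁⁆ * (b₁ * ⁅x i, b₂⁆ * b₁⁻¹) := by
          simp only [commutatorElement_def]; group
        rw [hid]; exact mul_mem h1 (hnormal.conj_mem _ h2 b₁)
      · have hid : ⁅x i, b'⁻¹⁆ = b'⁻¹ * ⁅x i, b'⁆⁻¹ * b' := by
          simp only [commutatorElement_def]; group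
        rw [hid]
        have := hnormal.conj_mem _ (inv_mem h1) b'⁻¹
        simpa using this
    · simp only [commutatorElement_one_left]; exact one_mem N
    · have hid : ⁅a₁ * a₂, b⁆ = (a₁ * ⁅a₂, b⁆ * a₁⁻¹) * ⁅a₁, b⁆ := by
        simp only [commutatorElement_def]; group
      rw [hid]; exact mul_mem (hnormal.conj_mem _ h2 a₁) h1
    · have hid : ⁅a'⁻¹, b⁆ = a'⁻¹ * ⁅a', b⁆⁻¹ * a' := by
        simp only [commutatorElement_def]; group
      rw [hid]
      have := hnormal.conj_mem _ (inv_mem h1) a'⁻¹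
      simpa using this
  exact (Subgroup.commutator_le).mpr (fun a _ b _ => hcomm a b)

/-- Every element of `γ_{k+2} = lowerCentralSeries G (k+1)` lies in the closure of `Tset x k`. -/
lemma gen_lcs : ∀ k : ℕ, (⊤ : Subgroup G).lowerCentralSeries (k + 1) ≤ Subgroup.closure (Tset x k) := by
  intro k
  induction k with
  | zero => rw [lowerCentralSeries_one]; exact gen_zero x hmeta hgen
  | succ k ih =>
    have hstep : (⊤ : Subgroup G).lowerCentralSeries (k + 2) = ⁅(⊤ : Subgroup G).lowerCentralSeries (k + 1), ⊤⁆ := rfl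
    rw [hstep]
    have hnormal : (Subgroup.closure (Tset x (k + 1))).Normal := Tclosure_normal x hmeta (k + 1)
    refine (Subgroup.commutator_le).mpr (fun v hv g hgt => ?_)
    have hv' : v ∈ Subgroup.closure (Tset x k) := ih hv
    have hg := mem_clx x hgen g
    clear hv hgt
    induction hg using Subgroup.closure_induction generalizing v with
    | mem g' hg' =>
      obtain ⟨i, rfl⟩ := hg'
      -- v is a product of elements of Tset x k
      have hv'' : v ∈ Submonoid.closure (Tset x k ∪ (Tset x k)⁻¹) := by
        rw [← Subgroup.closure_toSubmonoid]; exact hv'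
      obtain ⟨l, hl, rfl⟩ := Submonoid.exists_list_of_mem_closure hv''
      have hlT : ∀ y ∈ l, y ∈ Tset x k := by
        intro y hy
        rcases hl y hy with h1 | h1
        · exact h1
        · have := Tset_inv x hmeta (Set.mem_inv.mp h1)
          simpa using this
      rw [comm_list_prod hmeta l (fun y hy => Tset_subM x (hlT y hy)) (x i)]
      refine Subgroup.list_prod_mem _ (fun z hz => ?_)
      obtain ⟨y, hy, rfl⟩ := List.mem_map.mp hz
      exact Subgroup.subset_closure (Tset_succ x hmeta (hlT y hy) i)
    | one =>
      simp only [commutatorElement_one_right]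
      exact one_mem _
    | mul g₁ g₂ hg₁ hg₂ ih1 ih2 =>
      have hid : ⁅v, g₁ * g₂⁆ = ⁅v, g₁⁆ * (g₁ * ⁅v, g₂⁆ * g₁⁻¹) := by
        simp only [commutatorElement_def]; group
      rw [hid]
      exact mul_mem (ih1 v hv') (hnormal.conj_mem _ (ih2 v hv') g₁)
    | inv g' hg' ih1 =>
      have hid : ⁅v, g'⁻¹⁆ = g'⁻¹ * ⁅v, g'⁆⁻¹ * g' := by
        simp only [commutatorElement_def]; group
      rw [hid]
      have := hnormal.conj_mem _ (inv_mem (ih1 v hv')) g'⁻¹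
      simpa using this

end Gen

end TCAux

namespace TCAux

variable {G : Type*} [Group G]

section TC

/-! Lemmas about a subgroup equal to a twisted conjugacy class. -/

variable {c : G} {H : Subgroup G} (hH : (H : Set G) = twistedClass c)
include hH

lemma tc_mem (z : G) : ⁅z, c⁆ ∈ H := by
  rw [← SetLike.mem_coe, hH]; exact ⟨z, rfl⟩

lemma tc_conj {u : G} (hu : u ∈ H) (g : G) : g * u * g⁻¹ ∈ H := by
  have hu' : u ∈ twistedClass c := by rw [← hH]; exact hu
  obtain ⟨z, rfl⟩ := hu'
  have key : g * ⁅z, c⁆ * g⁻¹ = ⁅g * z, c⁆ * ⁅g, c⁆⁻¹ := by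
    simp only [commutatorElement_def]; group
  rw [key]
  exact mul_mem (tc_mem hH (g * z)) (inv_mem (tc_mem hH g))

lemma tc_right (z : G) : ⁅c, z⁆ ∈ H := by
  rw [← commutatorElement_inv]
  exact inv_mem (tc_mem hH z)

lemma tc_inner (w z : G) (b : Bool) : ⁅w * (cond b c c⁻¹) * w⁻¹, z⁆ ∈ H := by
  have htrue : ∀ w z : G, ⁅w * c * w⁻¹, z⁆ ∈ H := by
    intro w z
    have hid : ⁅w * c * w⁻¹, z⁆ = w * ⁅c, w⁻¹ * z * w⁆ * w⁻¹ := by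
      simp only [commutatorElement_def]; group
    rw [hid]
    exact tc_conj hH (tc_right hH _) w
  cases b
  · have hid : ⁅w * c⁻¹ * w⁻¹, z⁆ =
        (w * c * w⁻¹)⁻¹ * ⁅w * c * w⁻¹, z⁆⁻¹ * (w * c * w⁻¹) := by
      simp only [commutatorElement_def]; group
    rw [Bool.cond_false, hid]
    have h1 : ⁅w * c * w⁻¹, z⁆⁻¹ ∈ H := inv_mem (htrue w z)
    have h2 := tc_conj hH h1 (w * c * w⁻¹)⁻¹
    simpa using h2
  · rw [Bool.cond_true]; exact htrue w z

lemma tc_exists {u : G} (hu : u ∈ H) : ∃ z, u = ⁅c, z⁆ := by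
  have hu' : u⁻¹ ∈ twistedClass c := by rw [← hH]; exact inv_mem hu
  obtain ⟨z, hz⟩ := hu'
  exact ⟨z, by rw [← inv_inv u, hz, commutatorElement_inv]⟩

end TC

section LN

lemma leftNormed_congr {c c' : ℕ → G} : ∀ m, (∀ t, t ≤ m → c t = c' t) →
    leftNormed c m = leftNormed c' m := by
  intro m
  induction m with
  | zero => intro hm; simp only [leftNormed]; exact hm 0 le_rfl
  | succ m ih =>
    intro hm
    simp only [leftNormed]
    rw [ih (fun t ht => hm t (le_trans ht (Nat.le_succ m))), hm (m+1) le_rfl]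

lemma exists_leftNormed (L : List G) (g0 g1 : G) :
    ∃ c : ℕ → G, app ⁅g0, g1⁆ L = leftNormed c (L.length + 1) := by
  induction L using List.reverseRecOn with
  | nil =>
    refine ⟨fun t => if t = 0 then g0 else g1, ?_⟩
    show ⁅g0, g1⁆ = ⁅leftNormed _ 0, _⁆
    simp only [leftNormed]
    norm_num
  | append_singleton L a ih =>
    obtain ⟨c, hc⟩ := ih
    refine ⟨Function.update c (L.length + 2) a, ?_⟩
    have hlen : (L ++ [a]).length + 1 = L.length + 2 := by simp
    rw [app_append, hc, hlen]
    have h1 : leftNormed c (L.length + 1) =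
        leftNormed (Function.update c (L.length + 2) a) (L.length + 1) :=
      leftNormed_congr _ (fun t ht => (Function.update_of_ne (by omega) a c).symm)
    show ⁅leftNormed c (L.length + 1), a⁆ =
      ⁅leftNormed (Function.update c (L.length + 2) a) (L.length + 1),
        Function.update c (L.length + 2) a (L.length + 2)⁆
    rw [← h1, Function.update_self]

end LN

section Split

variable {K : Type*} [DecidableEq K] (tails : K → List G)
variable (hmeta : ∀ a ∈ commutator G, ∀ b ∈ commutator G, a * b = b * a)
include hmeta

lemma split (ks : List K) (hnd : ks.Nodup) :
    ∀ (l : List (K × G)), (∀ d ∈ l, d.2 ∈ commutator G) → (∀ d ∈ l, d.1 ∈ ks) →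
    (l.map (fun d => app d.2 (tails d.1))).prod
      = (ks.map (fun κ =>
          app (((l.filter (fun d => d.1 = κ)).map Prod.snd).prod) (tails κ))).prod := by
  intro l
  induction l with
  | nil =>
    intro _ _
    simp only [List.map_nil, List.prod_nil]
    symm
    apply List.prod_eq_one
    intro z hz
    obtain ⟨κ, _, rfl⟩ := List.mem_map.mp hz
    simp only [List.filter_nil, List.map_nil, List.prod_nil]
    exact app_one _
  | cons d l ih =>
    intro hM hks
    have hMl : ∀ d' ∈ l, d'.2 ∈ commutator G := fun d' hd' => hM d' (List.mem_cons_of_mem d hd')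
    have hksl : ∀ d' ∈ l, d'.1 ∈ ks := fun d' hd' => hks d' (List.mem_cons_of_mem d hd')
    have hdM : d.2 ∈ commutator G := hM d (List.mem_cons_self)
    obtain ⟨s, t, hst⟩ := List.append_of_mem (hks d (List.mem_cons_self))
    have hnd' := hst ▸ hnd
    have hnds := (List.nodup_append.mp hnd')
    have hd1t : d.1 ∉ t := (List.nodup_cons.mp hnds.2.1).1
    have hd1s : d.1 ∉ s := fun hmem => hnds.2.2 _ hmem _ List.mem_cons_self rfl
    -- abbreviations
    set f : K → G := fun κ =>
      app (((l.filter (fun d' => d'.1 = κ)).map Prod.snd).prod) (tails κ) with hf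
    set f' : K → G := fun κ =>
      app ((((d :: l).filter (fun d' => d'.1 = κ)).map Prod.snd).prod) (tails κ) with hf'
    have hfM : ∀ κ, f κ ∈ commutator G := by
      intro κ
      refine app_mem (Subgroup.list_prod_mem _ (fun z hz => ?_)) _
      obtain ⟨d', hd', rfl⟩ := List.mem_map.mp hz
      exact hMl d' (List.mem_of_mem_filter hd')
    have hAM : app d.2 (tails d.1) ∈ commutator G := app_mem hdM _
    have hfeq : ∀ κ, κ ≠ d.1 → f' κ = f κ := by
      intro κ hκ
      have : (d :: l).filter (fun d' => d'.1 = κ) = l.filter (fun d' => d'.1 = κ) :=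
        List.filter_cons_of_neg (by simp only [decide_eq_true_eq]; exact fun hc => hκ hc.symm)
      simp only [hf', hf, this]
    have hfd : f' d.1 = app d.2 (tails d.1) * f d.1 := by
      have : (d :: l).filter (fun d' => d'.1 = d.1) = d :: l.filter (fun d' => d'.1 = d.1) :=
        List.filter_cons_of_pos (by simp)
      simp only [hf', hf, this, List.map_cons, List.prod_cons]
      exact app_mul hmeta hdM _ _
    calc ((d :: l).map (fun d' => app d'.2 (tails d'.1))).prod
        = app d.2 (tails d.1) * (l.map (fun d' => app d'.2 (tails d'.1))).prod := by
          rw [List.map_cons, List.prod_cons]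
      _ = app d.2 (tails d.1) * (ks.map f).prod := by rw [ih hMl hksl]
      _ = (ks.map f').prod := by
          rw [hst, List.map_append, List.map_cons, List.prod_append, List.prod_cons,
            List.map_append, List.map_cons, List.prod_append, List.prod_cons]
          rw [List.map_congr_left (fun κ hκ => hfeq κ (fun hc => hd1s (hc ▸ hκ))),
            List.map_congr_left (fun κ hκ => hfeq κ (fun hc => hd1t (hc ▸ hκ))), hfd]
          have hcomm : Commute (app d.2 (tails d.1)) ((s.map f).prod) := by
            refine Commute.list_prod_right _ _ (fun z hz => ?_)
            obtain ⟨κ, _, rfl⟩ := List.mem_map.mp hz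
            exact hmeta _ hAM _ (hfM κ)
          calc app d.2 (tails d.1) * ((s.map f).prod * (f d.1 * (t.map f).prod))
              = app d.2 (tails d.1) * (s.map f).prod * (f d.1 * (t.map f).prod) := by
                simp only [mul_assoc]
            _ = (s.map f).prod * app d.2 (tails d.1) * (f d.1 * (t.map f).prod) := by
                rw [hcomm.eq]
            _ = (s.map f).prod * (app d.2 (tails d.1) * f d.1 * (t.map f).prod) := by
                simp only [mul_assoc]

end Split

end TCAux

namespace TCAux

variable {G : Type*} [Group G]

section Key

variable (n k : ℕ)

abbrev KeyT : Type := (Σ i : Fin n, Fin (i : ℕ)) × Sym (Fin n) (k - 1)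

variable {n k}

def keyI (κ : KeyT n k) : Fin n := κ.1.1

def keyJ (κ : KeyT n k) : Fin n := ⟨κ.1.2.val, lt_trans κ.1.2.isLt κ.1.1.isLt⟩

def keyTail (κ : KeyT n k) : List (Fin n) := Multiset.sort (κ.2 : Multiset (Fin n)) (· ≤ ·)

lemma keyTail_length (κ : KeyT n k) : (keyTail κ).length = k - 1 := by
  rw [keyTail, Multiset.length_sort]
  exact κ.2.2

lemma card_KeyT (hk : 1 ≤ k) :
    Fintype.card (KeyT n k) = n * (n - 1) / 2 * (n + k - 2).choose (k - 1) := by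
  rw [Fintype.card_prod, Fintype.card_sigma]
  have h1 : ∑ i : Fin n, Fintype.card (Fin (i : ℕ)) = n * (n - 1) / 2 := by
    simp only [Fintype.card_fin]
    rw [Fin.sum_univ_eq_sum_range (fun i => i) n]
    exact Finset.sum_range_id n
  rw [h1, Sym.card_sym_eq_choose, Fintype.card_fin]
  have h2 : n + (k - 1) - 1 = n + k - 2 := by omega
  rw [h2]

end Key

section Norm

variable {n : ℕ} (x : Fin n → G)
variable (hmeta : ∀ a ∈ commutator G, ∀ b ∈ commutator G, a * b = b * a)
include hmeta

lemma norm_data {k : ℕ} (hk : 1 ≤ k) (Hsel : KeyT n k → Subgroup G)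
    (hHsel : ∀ κ, ((Hsel κ : Set G) = twistedClass ⁅x (keyI κ), x (keyJ κ)⁆))
    {y : G} (hy : y ∈ Tset x k) :
    ∃ p : KeyT n k × G, p.2 ∈ Hsel p.1 ∧ p.2 ∈ commutator G ∧
      y = app p.2 ((keyTail p.1).map x) := by
  obtain ⟨i, j, hji, w, b, L, hL, rfl⟩ := hy
  have hperm : (Multiset.sort (↑L : Multiset (Fin n)) (· ≤ ·)).Perm L :=
    Multiset.coe_eq_coe.mp (Multiset.sort_eq _ _)
  have hlen : (Multiset.sort (↑L : Multiset (Fin n)) (· ≤ ·)).length = k :=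
    hperm.length_eq.trans hL
  have hsorted : (Multiset.sort (↑L : Multiset (Fin n)) (· ≤ ·)).Pairwise (· ≤ ·) :=
    Multiset.pairwise_sort _ _
  have happ : app (bse x i j w b) (L.map x)
      = app (bse x i j w b) ((Multiset.sort (↑L : Multiset (Fin n)) (· ≤ ·)).map x) :=
    app_perm hmeta (hperm.map x).symm (bse_mem x i j w b)
  obtain ⟨a, rest, hcons⟩ : ∃ a rest,
      Multiset.sort (↑L : Multiset (Fin n)) (· ≤ ·) = a :: rest := by
    cases hq : Multiset.sort (↑L : Multiset (Fin n)) (· ≤ ·) with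
    | nil => rw [hq] at hlen; simp at hlen; omega
    | cons a rest => exact ⟨a, rest, rfl⟩
  rw [hcons] at hlen hsorted happ
  have hrestlen : rest.length = k - 1 := by
    simp only [List.length_cons] at hlen; omega
  refine ⟨(((⟨i, ⟨j.val, hji⟩⟩ : Σ i : Fin n, Fin (i : ℕ)),
    (⟨(↑rest : Multiset (Fin n)), by rwa [Multiset.coe_card]⟩ : Sym (Fin n) (k - 1))),
    ⁅bse x i j w b, x a⁆), ?_, mem_M _ _, ?_⟩
  · -- membership in Hsel
    exact tc_inner (hHsel _) w (x a) b
  · -- the equation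
    have htail : keyTail ((⟨i, ⟨j.val, hji⟩⟩ : Σ i : Fin n, Fin (i : ℕ)),
        (⟨(↑rest : Multiset (Fin n)), by rwa [Multiset.coe_card]⟩ : Sym (Fin n) (k - 1)))
        = rest := by
      refine List.Perm.eq_of_pairwise' (Multiset.pairwise_sort _ _) ?_
        (Multiset.coe_eq_coe.mp (Multiset.sort_eq _ _))
      exact hsorted.of_cons
    rw [htail, happ, List.map_cons, app_cons]

end Norm

end TCAux

open TCAux

theorem stmt_10 {G : Type*} [Group G] (n : ℕ) (hn : 2 ≤ n) (x : Fin n → G)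
    (hgen : Subgroup.closure (Set.range x) = ⊤)
    (hmeta : ∀ a ∈ commutator G, ∀ b ∈ commutator G, a * b = b * a)
    (h : ∀ g : G, ∃ H : Subgroup G, (H : Set G) = twistedClass g)
    (k : ℕ) (hk : 1 ≤ k) :
    ∀ g ∈ (⊤ : Subgroup G).lowerCentralSeries (k + 1), ∃ l : List G,
      l.length ≤ n * (n - 1) / 2 * Nat.choose (n + k - 2) (k - 1) ∧
      (∀ y ∈ l, ∃ c : ℕ → G, y = leftNormed c (k + 1) ∨ y = (leftNormed c (k + 1))⁻¹) ∧
      l.prod = g := by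
  intro g hg
  classical
  choose Hsel hHsel using fun κ : KeyT n k => h ⁅x (keyI κ), x (keyJ κ)⁆
  have hgT : g ∈ Subgroup.closure (Tset x k) := gen_lcs x hmeta hgen k hg
  have hgT' : g ∈ Submonoid.closure (Tset x k ∪ (Tset x k)⁻¹) := by
    rw [← Subgroup.closure_toSubmonoid]; exact hgT
  obtain ⟨l₀, hl₀, hprod⟩ := Submonoid.exists_list_of_mem_closure hgT'
  have hl₀T : ∀ y ∈ l₀, y ∈ Tset x k := by
    intro y hy
    rcases hl₀ y hy with h1 | h1
    · exact h1
    · have := Tset_inv x hmeta (Set.mem_inv.mp h1)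
      simpa using this
  have hdata : ∀ y ∈ l₀, ∃ p : KeyT n k × G, p.2 ∈ Hsel p.1 ∧ p.2 ∈ commutator G ∧
      y = app p.2 ((keyTail p.1).map x) :=
    fun y hy => norm_data x hmeta hk Hsel hHsel (hl₀T y hy)
  set l₁ : List (KeyT n k × G) :=
    l₀.attach.map (fun yh => Classical.choose (hdata yh.1 yh.2)) with hl₁def
  have hl₁ : ∀ d ∈ l₁, d.2 ∈ Hsel d.1 ∧ d.2 ∈ commutator G := by
    intro d hd
    obtain ⟨yh, _, rfl⟩ := List.mem_map.mp hd
    obtain ⟨h1, h2, _⟩ := Classical.choose_spec (hdata yh.1 yh.2)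
    exact ⟨h1, h2⟩
  have hreal : l₁.map (fun d => app d.2 ((keyTail d.1).map x)) = l₀ := by
    rw [hl₁def, List.map_map]
    have heach : ∀ yh ∈ l₀.attach,
        ((fun d : KeyT n k × G => app d.2 ((keyTail d.1).map x)) ∘
          (fun yh => Classical.choose (hdata yh.1 yh.2))) yh = yh.1 := by
      intro yh _
      exact (Classical.choose_spec (hdata yh.1 yh.2)).2.2.symm
    rw [List.map_congr_left heach, List.attach_map_subtype_val]
  set ks : List (KeyT n k) := (Finset.univ : Finset (KeyT n k)).toList with hksdef
  refine ⟨ks.map (fun κ =>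
    app (((l₁.filter (fun d => d.1 = κ)).map Prod.snd).prod) ((keyTail κ).map x)), ?_, ?_, ?_⟩
  · rw [List.length_map, hksdef, Finset.length_toList, Finset.card_univ, card_KeyT hk]
  · intro y hy
    obtain ⟨κ, _, rfl⟩ := List.mem_map.mp hy
    have hP : ((l₁.filter (fun d => d.1 = κ)).map Prod.snd).prod ∈ Hsel κ := by
      refine Subgroup.list_prod_mem _ (fun z hz => ?_)
      obtain ⟨d, hd, rfl⟩ := List.mem_map.mp hz
      have hmem := (hl₁ d (List.mem_of_mem_filter hd)).1
      have hdk : d.1 = κ := by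
        have := List.of_mem_filter hd
        simpa using this
      rwa [hdk] at hmem
    obtain ⟨z, hz⟩ := tc_exists (hHsel κ) hP
    rw [hz]
    obtain ⟨cf, hcf⟩ := exists_leftNormed (z :: (keyTail κ).map x) (x (keyI κ)) (x (keyJ κ))
    refine ⟨cf, Or.inl ?_⟩
    have hlen2 : (z :: (keyTail κ).map x).length + 1 = k + 1 := by
      simp only [List.length_cons, List.length_map, keyTail_length]
      omega
    rw [hlen2] at hcf
    rw [← hcf]
    rfl
  · have hsplit := split (fun κ => (keyTail κ).map x) hmeta ks (hksdef ▸ Finset.nodup_toList _)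
      l₁ (fun d hd => (hl₁ d hd).2)
      (fun d _ => hksdef ▸ Finset.mem_toList.mpr (Finset.mem_univ _))
    rw [← hsplit, hreal, hprod]
end

section
/- Let G be an infinite group such that for every g in G the twisted conjugacy class [e]_g = {[x,g] : x ∈ G} is a subgroup of G. Then G has infinitely many conjugacy classes. -/
open scoped commutatorElement

theorem stmt_13 {G : Type*} [Group G] [Infinite G]
    (h : ∀ g : G, ∃ H : Subgroup G, (H : Set G) = twistedClass g) :
    Infinite (ConjClasses G) := by
  by_contra hfin
  rw [not_infinite_iff_finite] at hfin
  choose H hH using h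
  have memH : ∀ g x : G, ⁅x, g⁆ ∈ H g := by
    intro g x
    show ⁅x, g⁆ ∈ (H g : Set G)
    rw [hH]; exact ⟨x, rfl⟩
  have exH : ∀ g : G, ∀ a ∈ H g, ∃ x : G, a = ⁅x, g⁆ := by
    intro g a ha
    have : a ∈ (H g : Set G) := ha
    rw [hH] at this; exact this
  have normalH : ∀ g : G, (H g).Normal := by
    intro g
    constructor
    intro n hn z
    obtain ⟨x, rfl⟩ := exH g n hn
    have key : z * ⁅x, g⁆ * z⁻¹ = ⁅z * x, g⁆ * ⁅z, g⁆⁻¹ := by group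
    rw [key]
    exact mul_mem (memH g _) (inv_mem (memH g _))
  have selfH : ∀ g : G, g ∈ H g → g = 1 := by
    intro g hg
    obtain ⟨x, hx⟩ := exH g g⁻¹ (inv_mem hg)
    have h1 : x * g * x⁻¹ = 1 := by
      have : g⁻¹ * g = (x * g * x⁻¹ * g⁻¹) * g := by
        rw [← commutatorElement_def, ← hx]
      simpa [mul_assoc] using this.symm
    have : g = x⁻¹ * (x * g * x⁻¹) * x := by group
    rw [h1] at this
    simpa using this
  -- y ∈ H g implies H y ⊆ H g
  have subH : ∀ g y : G, y ∈ H g → ∀ a ∈ H y, a ∈ H g := by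
    intro g y hy a ha
    obtain ⟨x, rfl⟩ := exH y a ha
    have key : ⁅x, y⁆ = (x * y * x⁻¹) * y⁻¹ := by group
    rw [key]
    exact mul_mem ((normalH g).conj_mem y hy x) (inv_mem hy)
  -- conjugacy class of y is contained in a right coset of H y
  have carrier_subset : ∀ y : G,
      (ConjClasses.mk y).carrier ⊆ (fun a => a * y) '' (H y : Set G) := by
    intro y a ha
    rw [ConjClasses.mem_carrier_iff_mk_eq, ConjClasses.mk_eq_mk_iff_isConj] at ha
    obtain ⟨c, hc⟩ := (isConj_iff).mp ha.symm
    refine ⟨⁅c, y⁆, memH y c, ?_⟩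
    rw [← hc]; group
  have finCarrier : ∀ y : G, (H y : Set G).Finite → (ConjClasses.mk y).carrier.Finite := by
    intro y hf
    exact (hf.image _).subset (carrier_subset y)
  -- H is constant on conjugacy classes
  have Lsub : ∀ g x : G, (H (x * g * x⁻¹) : Set G) ⊆ (H g : Set G) := by
    intro g x a ha
    obtain ⟨b, rfl⟩ := exH (x * g * x⁻¹) a ha
    have key : ⁅b, x * g * x⁻¹⁆ = x * ⁅x⁻¹ * b * x, g⁆ * x⁻¹ := by group
    rw [key]
    exact (normalH g).conj_mem _ (memH g _) x
  have hconst : ∀ a b : G, IsConj a b → (H a : Set G) = (H b : Set G) := by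
    intro a b hab
    obtain ⟨c, hc⟩ := isConj_iff.mp hab
    have e1 : c⁻¹ * b * c⁻¹⁻¹ = a := by rw [inv_inv, ← hc]; group
    have h2 := Lsub b c⁻¹
    rw [e1] at h2
    have h3 := Lsub a c
    rw [hc] at h3
    exact le_antisymm h2 h3
  set F : ConjClasses G → Set G :=
    Quotient.lift (fun g : G => (H g : Set G)) (fun a b hab => hconst a b hab) with hF
  have hFmk : ∀ g : G, F (ConjClasses.mk g) = (H g : Set G) := fun g => rfl
  -- the collection of infinite H's is finite
  set S : Set (Set G) := {s | (∃ g : G, s = (H g : Set G)) ∧ s.Infinite} with hS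
  have hSfin : S.Finite := by
    apply (Set.finite_range F).subset
    rintro s ⟨⟨g, rfl⟩, -⟩
    exact ⟨ConjClasses.mk g, hFmk g⟩
  -- some H g is infinite
  have hSne : S.Nonempty := by
    have hcover : (Set.univ : Set G) ⊆ ⋃ c : ConjClasses G, c.carrier := by
      intro a _
      exact Set.mem_iUnion.2 ⟨ConjClasses.mk a, ConjClasses.mem_carrier_mk⟩
    have hex : ∃ c : ConjClasses G, c.carrier.Infinite := by
      by_contra hc
      push_neg at hc
      exact Set.infinite_univ ((Set.finite_iUnion hc).subset hcover)
    obtain ⟨c, hcinf⟩ := hex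
    obtain ⟨g, rfl⟩ := c.exists_rep
    refine ⟨(H g : Set G), ⟨g, rfl⟩, ?_⟩
    intro hfin'
    exact hcinf (finCarrier g hfin')
  -- pick a minimal infinite H
  obtain ⟨M, hMS, hMmin⟩ := hSfin.exists_minimal hSne
  obtain ⟨⟨g₀, hMg₀⟩, hMinf⟩ := hMS
  -- every y in M has finite H y
  have hyfin : ∀ y : G, y ∈ M → (H y : Set G).Finite := by
    intro y hyM
    by_contra hinf
    have hyH : y ∈ H g₀ := by rw [hMg₀] at hyM; exact hyM
    have hsub : (H y : Set G) ⊆ M := by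
      rw [hMg₀]; exact fun a ha => subH g₀ y hyH a ha
    have heq : (H y : Set G) = M :=
      le_antisymm hsub (hMmin ⟨⟨y, rfl⟩, hinf⟩ hsub)
    have hy1 : y = 1 := selfH y (by rw [← heq] at hyM; exact hyM)
    -- but H 1 = {1} is finite
    apply hinf
    have : (H y : Set G) ⊆ {1} := by
      intro a ha
      obtain ⟨x, rfl⟩ := exH y a ha
      rw [hy1]
      simp [commutatorElement_def]
    exact (Set.finite_singleton 1).subset this
  -- hence M is a finite union of finite conjugacy classes: contradiction
  apply hMinf
  have hMsub : M ⊆ ⋃ c : ConjClasses G, (c.carrier ∩ M) := by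
    intro a haM
    exact Set.mem_iUnion.2 ⟨ConjClasses.mk a, ConjClasses.mem_carrier_mk, haM⟩
  apply (Set.finite_iUnion ?_).subset hMsub
  intro c
  by_cases hne : (c.carrier ∩ M).Nonempty
  · obtain ⟨y, hyc, hyM⟩ := hne
    have : c = ConjClasses.mk y := (ConjClasses.mem_carrier_iff_mk_eq.mp hyc).symm
    rw [this]
    exact (finCarrier y (hyfin y hyM)).inter_of_left M
  · rw [Set.not_nonempty_iff_eq_empty] at hne
    rw [hne]
    exact Set.finite_empty
end

section
/- Let G be a finitely generated group such that for every g in G the twisted conjugacy class [e]_g = {[x,g] : x ∈ G} is a subgroup of G. Suppose that for every sequence g₁, g₂, … of elements of G the intersection ⋂_k [e]_{[g₁,…,g_k]} (over all k ≥ 1, where [g₁,…,g_k] is the left-normed commutator) equals {e}. Then for every k, either γ_k(G) = {e} or γ_k(G) ≠ γ_{k+1}(G). -/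
open scoped commutatorElement

namespace Stmt14Aux

variable {G : Type*} [Group G]

/-- Finite join of twisted-class subgroups indexed by a list. -/
def Kl (H : G → Subgroup G) (l : List G) : Subgroup G :=
  l.foldr (fun c P => H c ⊔ P) ⊥

variable (H : G → Subgroup G)

@[simp] lemma Kl_nil : Kl H ([] : List G) = ⊥ := rfl

@[simp] lemma Kl_cons (c : G) (t : List G) : Kl H (c :: t) = H c ⊔ Kl H t := rfl

lemma H_le_Kl_of_mem {c : G} : ∀ {l : List G}, c ∈ l → H c ≤ Kl H l := by
  intro l hl
  induction l with
  | nil => simp at hl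
  | cons d t ih =>
    rw [Kl_cons]
    rcases List.mem_cons.1 hl with h1 | h2
    · subst h1; exact le_sup_left
    · exact (ih h2).trans le_sup_right

lemma Kl_le {M : Subgroup G} : ∀ {l : List G}, (∀ c ∈ l, H c ≤ M) → Kl H l ≤ M := by
  intro l hl
  induction l with
  | nil => exact bot_le
  | cons d t ih =>
    rw [Kl_cons]
    exact sup_le (hl d (by simp)) (ih fun c hc => hl c (List.mem_cons_of_mem _ hc))

lemma Kl_append (l₁ l₂ : List G) : Kl H (l₁ ++ l₂) = Kl H l₁ ⊔ Kl H l₂ := by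
  induction l₁ with
  | nil => simp
  | cons c t ih => rw [List.cons_append, Kl_cons, Kl_cons, ih, sup_assoc]

/-- children of one node -/
def childrenOf (c : G) (ts : List G) : List G := ts.map fun t => ⁅c, t⁆

/-- children of all nodes of a list -/
def childrenL (l ts : List G) : List G := l.foldr (fun c acc => childrenOf c ts ++ acc) []

lemma childrenL_cons (c : G) (l ts : List G) :
    childrenL (c :: l) ts = childrenOf c ts ++ childrenL l ts := rfl

lemma mem_childrenL {d : G} {ts : List G} :
    ∀ {l : List G}, d ∈ childrenL l ts → ∃ c ∈ l, ∃ t ∈ ts, d = ⁅c, t⁆ := by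
  intro l hd
  induction l with
  | nil => simp [childrenL] at hd
  | cons c t ih =>
    rw [childrenL_cons, List.mem_append] at hd
    rcases hd with h1 | h2
    · obtain ⟨x, hx, rfl⟩ := List.mem_map.1 h1
      exact ⟨c, by simp, x, hx, rfl⟩
    · obtain ⟨c', hc', x, hx, rfl⟩ := ih h2
      exact ⟨c', List.mem_cons_of_mem _ hc', x, hx, rfl⟩

variable (hH : ∀ g : G, (H g : Set G) = twistedClass g)

include hH

lemma mem_H_iff {g a : G} : a ∈ H g ↔ ∃ x : G, a = ⁅x, g⁆ := by
  rw [← SetLike.mem_coe, hH]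
  exact Iff.rfl

lemma commutator_mem_H (x g : G) : ⁅x, g⁆ ∈ H g := (mem_H_iff H hH).2 ⟨x, rfl⟩

lemma H_one : H 1 = ⊥ := by
  ext a
  simp [mem_H_iff H hH, Subgroup.mem_bot]

lemma H_normal (g : G) : (H g).Normal := by
  constructor
  intro a ha z
  obtain ⟨x, rfl⟩ := (mem_H_iff H hH).1 ha
  have key : z * ⁅x, g⁆ * z⁻¹ = ⁅z * x, g⁆ * ⁅z, g⁆⁻¹ := by group
  rw [key]
  exact mul_mem (commutator_mem_H H hH _ _) (inv_mem (commutator_mem_H H hH _ _))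

lemma H_le_of_mem {P : Subgroup G} (hP : P.Normal) {c : G} (hc : c ∈ P) : H c ≤ P := by
  intro a ha
  obtain ⟨x, rfl⟩ := (mem_H_iff H hH).1 ha
  have : ⁅x, c⁆ = (x * c * x⁻¹) * c⁻¹ := by group
  rw [this]
  exact mul_mem (hP.conj_mem c hc x) (inv_mem hc)

lemma H_mul_le (g g' : G) : H (g * g') ≤ H g ⊔ H g' := by
  intro a ha
  obtain ⟨x, rfl⟩ := (mem_H_iff H hH).1 ha
  have key : ⁅x, g * g'⁆ = ⁅x, g⁆ * (g * ⁅x, g'⁆ * g⁻¹) := by group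
  rw [key]
  exact mul_mem (Subgroup.mem_sup_left (commutator_mem_H H hH _ _))
    (Subgroup.mem_sup_right ((H_normal H hH g').conj_mem _ (commutator_mem_H H hH _ _) g))

lemma H_inv_le (g : G) : H g⁻¹ ≤ H g := by
  intro a ha
  obtain ⟨x, rfl⟩ := (mem_H_iff H hH).1 ha
  have key : ⁅x, g⁻¹⁆ = (g⁻¹ * ⁅x, g⁆ * (g⁻¹)⁻¹)⁻¹ := by group
  rw [key]
  exact inv_mem ((H_normal H hH g).conj_mem _ (commutator_mem_H H hH _ _) g⁻¹)

lemma H_conj_le (g z : G) : H (z * g * z⁻¹) ≤ H g := by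
  intro a ha
  obtain ⟨x, rfl⟩ := (mem_H_iff H hH).1 ha
  have key : ⁅x, z * g * z⁻¹⁆ = z * ⁅z⁻¹ * x * z, g⁆ * z⁻¹ := by group
  rw [key]
  exact (H_normal H hH g).conj_mem _ (commutator_mem_H H hH _ _) z

lemma Kl_normal : ∀ l : List G, (Kl H l).Normal := by
  intro l
  induction l with
  | nil => rw [Kl_nil]; infer_instance
  | cons c t ih =>
    rw [Kl_cons]
    haveI := H_normal H hH c
    haveI := ih
    infer_instance

/-- second slot subadditivity over a generated subgroup -/
lemma H_commutator_le (c : G) (ts : List G) :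
    ∀ y ∈ Subgroup.closure {x : G | x ∈ ts}, H ⁅c, y⁆ ≤ Kl H (childrenOf c ts) := by
  intro y hy
  induction hy using Subgroup.closure_induction with
  | mem x hx =>
    exact H_le_Kl_of_mem H (l := childrenOf c ts) (List.mem_map.2 ⟨x, hx, rfl⟩)
  | one =>
    rw [commutatorElement_one_right, H_one H hH]
    exact bot_le
  | mul a b ha hb iha ihb =>
    have key : ⁅c, a * b⁆ = ⁅c, a⁆ * (a * ⁅c, b⁆ * a⁻¹) := by group
    rw [key]
    refine (H_mul_le H hH _ _).trans (sup_le iha ((H_conj_le H hH _ _).trans ihb))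
  | inv a ha iha =>
    have key : ⁅c, a⁻¹⁆ = (a⁻¹ * ⁅c, a⁆ * (a⁻¹)⁻¹)⁻¹ := by group
    rw [key]
    exact (H_inv_le H hH _).trans ((H_conj_le H hH _ _).trans iha)

/-- first slot subadditivity over a generated subgroup -/
lemma H_gen_le (ts : List G) :
    ∀ y ∈ Subgroup.closure {x : G | x ∈ ts}, H y ≤ Kl H ts := by
  intro y hy
  induction hy using Subgroup.closure_induction with
  | mem x hx => exact H_le_Kl_of_mem H hx
  | one => rw [H_one H hH]; exact bot_le
  | mul a b ha hb iha ihb => exact (H_mul_le H hH _ _).trans (sup_le iha ihb)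
  | inv a ha iha => exact (H_inv_le H hH _).trans iha

/-- the class of any element of a finite join of classes is contained in the
join of the classes of the children commutators -/
lemma H_le_children (ts : List G)
    (hts : ∀ x : G, x ∈ Subgroup.closure {x : G | x ∈ ts}) :
    ∀ l : List G, ∀ p ∈ Kl H l, H p ≤ Kl H (childrenL l ts) := by
  intro l
  induction l with
  | nil =>
    intro p hp
    rw [Kl_nil, Subgroup.mem_bot] at hp
    subst hp
    rw [H_one H hH]
    exact bot_le
  | cons c t ih =>
    intro p hp
    rw [Kl_cons] at hp
    haveI := Kl_normal H hH t
    rw [← SetLike.mem_coe, Subgroup.mul_normal] at hp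
    obtain ⟨a, ha, b, hb, rfl⟩ := hp
    obtain ⟨x, rfl⟩ := (mem_H_iff H hH).1 ha
    rw [childrenL_cons, Kl_append]
    refine (H_mul_le H hH _ _).trans (sup_le ?_ ?_)
    · have key : ⁅x, c⁆ = ⁅c, x⁆⁻¹ := (commutatorElement_inv c x).symm
      rw [key]
      exact ((H_inv_le H hH _).trans (H_commutator_le H hH c ts x (hts x))).trans le_sup_left
    · exact (ih b hb).trans le_sup_right

/-- key descent lemma: a subgroup equal to a finite join of twisted classes of
its own elements is trivial. -/
lemma descent (N : Subgroup G) :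
    ∀ l : List G, N = Kl H l → (∀ c ∈ l, c ∈ N) → N = ⊥ := by
  intro l
  induction l with
  | nil => intro hN _; simpa using hN
  | cons c t ih =>
    intro hN hmem
    haveI hKt := Kl_normal H hH t
    have hc : c ∈ N := hmem c (by simp)
    have hcinv : c⁻¹ ∈ N := inv_mem hc
    rw [hN, Kl_cons, ← SetLike.mem_coe, Subgroup.mul_normal] at hcinv
    obtain ⟨a, ha, p, hp, heq⟩ := hcinv
    obtain ⟨y, rfl⟩ := (mem_H_iff H hH).1 ha
    -- heq : ⁅y, c⁆ * p = c⁻¹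
    have hyc : y * c * y⁻¹ = c⁻¹ * p⁻¹ * c := by
      rw [← heq]; group
    have hpc : c⁻¹ * p⁻¹ * c ∈ Kl H t := by
      have h2 := hKt.conj_mem _ (inv_mem hp) c⁻¹
      simpa using h2
    have hcKt : c ∈ Kl H t := by
      have h3 : y * c * y⁻¹ ∈ Kl H t := hyc ▸ hpc
      have h4 := hKt.conj_mem _ h3 y⁻¹
      simpa [mul_assoc] using h4
    have hNt : N = Kl H t := by
      rw [hN, Kl_cons]
      exact le_antisymm (sup_le (H_le_of_mem H hH hKt hcKt) le_rfl) le_sup_right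
    exact ih hNt fun d hd => hmem d (List.mem_cons_of_mem _ hd)

end Stmt14Aux

open Stmt14Aux

theorem stmt_14 {G : Type*} [Group G] (hfg : Group.FG G)
    (h : ∀ g : G, ∃ H : Subgroup G, (H : Set G) = twistedClass g)
    (hint : ∀ g : ℕ → G, (⋂ k : ℕ, twistedClass (leftNormed g k)) = {(1 : G)}) :
    ∀ k : ℕ, (⊤ : Subgroup G).lowerCentralSeries k = ⊥ ∨
      (⊤ : Subgroup G).lowerCentralSeries k ≠ (⊤ : Subgroup G).lowerCentralSeries (k + 1) := by
  classical
  choose H hH using h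
  obtain ⟨S, hS⟩ := hfg.out
  set ts : List G := S.toList with hts_def
  have hset : {x : G | x ∈ ts} = (S : Set G) := by
    ext x; simp [hts_def, Finset.mem_toList]
  have hts : ∀ x : G, x ∈ Subgroup.closure {x : G | x ∈ ts} := by
    intro x
    rw [hset, hS]
    trivial
  -- the iterated children lists
  set L : ℕ → List G := fun k => Nat.rec ts (fun _ l => childrenL l ts) k with hL
  have hL0 : L 0 = ts := rfl
  have hLsucc : ∀ k, L (k + 1) = childrenL (L k) ts := fun k => rfl
  -- invariant: entries of L k lie in (⊤ : Subgroup G).lowerCentralSeries k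
  have hinv : ∀ k : ℕ, ∀ d ∈ L k, d ∈ (⊤ : Subgroup G).lowerCentralSeries k := by
    intro k
    induction k with
    | zero => intro d _; exact Subgroup.mem_top d
    | succ k ih =>
      intro d hd
      rw [hLsucc] at hd
      obtain ⟨c, hc, t, _, rfl⟩ := mem_childrenL hd
      exact Subgroup.commutator_mem_commutator (ih c hc) (Subgroup.mem_top t)
  -- main structure lemma
  have hmain : ∀ k : ℕ, (⊤ : Subgroup G).lowerCentralSeries (k + 1) = Kl H (L k) := by
    intro k
    induction k with
    | zero =>
      apply le_antisymm
      · show ⁅(⊤ : Subgroup G), ⊤⁆ ≤ Kl H (L 0)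
        rw [Subgroup.commutator_le]
        intro p _ q _
        exact H_gen_le H hH ts q (hts q) (commutator_mem_H H hH p q)
      · refine Kl_le H ?_
        intro c _
        intro a ha
        obtain ⟨x, rfl⟩ := (mem_H_iff H hH).1 ha
        exact Subgroup.commutator_mem_commutator (Subgroup.mem_top x) (Subgroup.mem_top c)
    | succ k ih =>
      apply le_antisymm
      · show ⁅(⊤ : Subgroup G).lowerCentralSeries (k + 1), ⊤⁆ ≤ Kl H (L (k + 1))
        rw [Subgroup.commutator_le]
        intro p hp q _
        have hpK : p ∈ Kl H (L k) := by rwa [ih] at hp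
        have key : ⁅p, q⁆ = ⁅q, p⁆⁻¹ := (commutatorElement_inv q p).symm
        rw [key]
        have : ⁅q, p⁆ ∈ H p := commutator_mem_H H hH q p
        have hHp : H p ≤ Kl H (L (k + 1)) := by
          rw [hLsucc]
          exact H_le_children H hH ts hts (L k) p hpK
        exact hHp (inv_mem this)
      · refine Kl_le H ?_
        intro d hd
        intro a ha
        obtain ⟨x, rfl⟩ := (mem_H_iff H hH).1 ha
        have hd' : d ∈ (⊤ : Subgroup G).lowerCentralSeries (k + 1) := hinv (k + 1) d hd
        have : ⁅d, x⁆ ∈ ⁅(⊤ : Subgroup G).lowerCentralSeries (k + 1), (⊤ : Subgroup G)⁆ :=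
          Subgroup.commutator_mem_commutator hd' (Subgroup.mem_top x)
        have key : ⁅x, d⁆ = ⁅d, x⁆⁻¹ := (commutatorElement_inv d x).symm
        rw [key]
        exact inv_mem this
  intro k
  by_cases hbot : (⊤ : Subgroup G).lowerCentralSeries k = ⊥
  · exact Or.inl hbot
  · refine Or.inr fun heq => hbot ?_
    refine descent H hH ((⊤ : Subgroup G).lowerCentralSeries k) (L k) ?_ (hinv k)
    rw [heq]
    exact hmain k
end

section
/- Let p be an odd prime, let G be a finite group with a normal abelian p-subgroup A such that the quotient G/A is cyclic of order pⁿ, and let t ∈ G be an element whose image in G/A generates G/A. If for every automorphism φ of G the twisted conjugacy class [e]_φ = {g⁻¹·φ(g) : g ∈ G} is a subgroup of G, then t⁻¹at = a for every a ∈ A with aᵖ = e. -/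
private lemma aux_main {G : Type*} [Group G] [Finite G] (p : ℕ) (hp : p.Prime) (hodd : Odd p)
    (A : Subgroup G) [hA : A.Normal] (hcomm : ∀ a ∈ A, ∀ b ∈ A, a * b = b * a)
    (n : ℕ) (hn : n ≠ 0) (hcard : Nat.card (G ⧸ A) = p ^ n)
    (t : G) (ht : Subgroup.zpowers (QuotientGroup.mk t : G ⧸ A) = ⊤)
    (h : ∀ φ : G ≃* G, ∃ H : Subgroup G, (H : Set G) = twistedClassAut φ)
    (a x : G) (haA : a ∈ A) (hap : a ^ p = 1) (hxA : x ∈ A) (hxp : x ^ p = 1)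
    (hx1 : x ≠ 1) (hxdef : t⁻¹ * a * t = a * x) (hxt : t⁻¹ * x * t = x) : False := by
  haveI := Fact.mk hp
  obtain ⟨m, hm⟩ := hodd
  -- the square root y of x
  set y : G := x ^ (m + 1) with hy
  have hyx : y * y = x := by
    rw [hy, ← pow_add]
    have hmm : m + 1 + (m + 1) = p + 1 := by omega
    rw [hmm, pow_succ, hxp, one_mul]
  have hyA : y ∈ A := A.pow_mem hxA _
  have hyp1 : y ^ p = 1 := by rw [hy, ← pow_mul, mul_comm, pow_mul, hxp, one_pow]
  have hy1 : y ≠ 1 := fun hh => hx1 (by rw [← hyx, hh, one_mul])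
  have hordery : orderOf y = p := orderOf_eq_prime hyp1 hy1
  -- commutation facts
  have hcxt : Commute t x := by
    have h2 : t * (t⁻¹ * x * t) = x * t := by group
    rw [hxt] at h2; exact h2
  have hcty : Commute t y := hcxt.pow_right (m + 1)
  have hcay : Commute a y := hcomm a haA y hyA
  have KY : ∀ (j s : ℤ), (t ^ j)⁻¹ * y ^ s * t ^ j = y ^ s := by
    intro j s
    have hc := (hcty.zpow_zpow j s).eq
    rw [mul_assoc, ← hc, ← mul_assoc, inv_mul_cancel, one_mul]
  have KY1 : ∀ s : ℤ, t⁻¹ * y ^ s * t = y ^ s := by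
    intro s
    have := KY 1 s; rwa [zpow_one] at this
  have KY1' : ∀ s : ℤ, t * y ^ s * t⁻¹ = y ^ s := by
    intro s
    have := KY (-1) s; rwa [zpow_neg_one, inv_inv] at this
  have hconj_a : t⁻¹ * a * t = a * y ^ (2 : ℤ) := by
    rw [hxdef, zpow_two, ← hyx]
  have hconj_a' : t * a * t⁻¹ = a * y ^ (-2 : ℤ) := by
    have h3 : t * (t⁻¹ * a * t) * t⁻¹ = a := by group
    rw [hconj_a] at h3
    have h4 : t * (a * y ^ (2:ℤ)) * t⁻¹ = (t * a * t⁻¹) * (t * y ^ (2:ℤ) * t⁻¹) := by group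
    rw [h4, KY1' 2] at h3
    have h5 : t * a * t⁻¹ * y ^ (2:ℤ) * y ^ (-2:ℤ) = t * a * t⁻¹ := by group
    rw [h3] at h5
    exact h5.symm
  -- conjugation of a by powers of t
  have KA : ∀ k : ℤ, (t ^ k)⁻¹ * a * t ^ k = a * y ^ (2 * k) := by
    intro k
    induction k using Int.induction_on with
    | zero => simp
    | succ i ih =>
      calc (t ^ ((i : ℤ) + 1))⁻¹ * a * t ^ ((i : ℤ) + 1)
          = t⁻¹ * ((t ^ (i : ℤ))⁻¹ * a * t ^ (i : ℤ)) * t := by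
            rw [zpow_add_one]; group
        _ = t⁻¹ * (a * y ^ (2 * (i : ℤ))) * t := by rw [ih]
        _ = (t⁻¹ * a * t) * (t⁻¹ * y ^ (2 * (i : ℤ)) * t) := by group
        _ = (a * y ^ (2 : ℤ)) * y ^ (2 * (i : ℤ)) := by rw [hconj_a, KY1]
        _ = a * y ^ (2 * ((i : ℤ) + 1)) := by
            rw [mul_assoc, ← zpow_add]; ring_nf
    | pred i ih =>
      calc (t ^ (-(i : ℤ) - 1))⁻¹ * a * t ^ (-(i : ℤ) - 1)
          = t * ((t ^ (-(i : ℤ)))⁻¹ * a * t ^ (-(i : ℤ))) * t⁻¹ := by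
            rw [zpow_sub_one]; group
        _ = t * (a * y ^ (2 * (-(i : ℤ)))) * t⁻¹ := by rw [ih]
        _ = (t * a * t⁻¹) * (t * y ^ (2 * (-(i : ℤ))) * t⁻¹) := by group
        _ = (a * y ^ (-2 : ℤ)) * y ^ (2 * (-(i : ℤ))) := by rw [hconj_a', KY1']
        _ = a * y ^ (2 * (-(i : ℤ) - 1)) := by
            rw [mul_assoc, ← zpow_add]; ring_nf
  -- killing exponents divisible by p
  have hkill : ∀ g : G, g ^ p = 1 → ∀ s : ℤ, (p : ℤ) ∣ s → g ^ s = 1 := by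
    rintro g hg s ⟨c, rfl⟩
    rw [zpow_mul, zpow_natCast, hg, one_zpow]
  -- the 1-cocycle s
  set S : ℤ → G := fun k => a ^ k * y ^ (k * (k + 1)) with hS
  have s_mem : ∀ k : ℤ, S k ∈ A := fun k => A.mul_mem (A.zpow_mem haA k) (A.zpow_mem hyA _)
  have KS : ∀ k j : ℤ, (t ^ j)⁻¹ * S k * t ^ j = a ^ k * y ^ (k * (k + 1) + 2 * j * k) := by
    intro k j
    have h1 : (t ^ j)⁻¹ * S k * t ^ j
        = ((t ^ j)⁻¹ * a * t ^ j) ^ k * ((t ^ j)⁻¹ * y ^ (k * (k+1)) * t ^ j) := by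
      simp only [hS]
      have hcz := conj_zpow (i := k) (a := (t ^ j)⁻¹) (b := a)
      rw [inv_inv] at hcz
      rw [hcz]; group
    rw [h1, KA j, KY j]
    have hcom : Commute a (y ^ (2 * j)) := hcay.zpow_right _
    rw [hcom.mul_zpow]
    rw [mul_assoc, ← zpow_mul, ← zpow_add]
    ring_nf
  have s_cocycle : ∀ k j : ℤ, ((t ^ j)⁻¹ * S k * t ^ j) * S j = S (k + j) := by
    intro k j
    rw [KS k j, hS]
    simp only []
    have hc1 : Commute (y ^ (k * (k + 1) + 2 * j * k)) (a ^ j) := (hcay.zpow_zpow _ _).symm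
    calc a ^ k * y ^ (k * (k + 1) + 2 * j * k) * (a ^ j * y ^ (j * (j + 1)))
        = a ^ k * (y ^ (k * (k + 1) + 2 * j * k) * a ^ j) * y ^ (j * (j + 1)) := by group
      _ = a ^ k * (a ^ j * y ^ (k * (k + 1) + 2 * j * k)) * y ^ (j * (j + 1)) := by rw [hc1.eq]
      _ = a ^ (k + j) * y ^ ((k * (k + 1) + 2 * j * k) + j * (j + 1)) := by
          rw [zpow_add, zpow_add]; group
      _ = a ^ (k + j) * y ^ ((k + j) * ((k + j) + 1)) := by ring_nf
  have s_congr : ∀ k k' : ℤ, (p : ℤ) ∣ (k - k') → S k = S k' := by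
    intro k k' hd
    have ha' : a ^ (k - k') = 1 := hkill a hap _ hd
    have hy' : y ^ (k * (k + 1) - k' * (k' + 1)) = 1 := by
      apply hkill y hyp1
      have : k * (k + 1) - k' * (k' + 1) = (k - k') * (k + k' + 1) := by ring
      rw [this]
      exact hd.mul_right _
    rw [hS]
    have e1 : a ^ k = a ^ k' := by
      have : a ^ k = a ^ (k' + (k - k')) := by ring_nf
      rw [this, zpow_add, ha', mul_one]
    have e2 : y ^ (k * (k + 1)) = y ^ (k' * (k' + 1)) := by
      have : k * (k + 1) = k' * (k' + 1) + (k * (k + 1) - k' * (k' + 1)) := by ring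
      rw [this, zpow_add, hy', mul_one]
    simp only [e1, e2]
  -- quotient facts
  have horder_t : orderOf (QuotientGroup.mk t : G ⧸ A) = p ^ n := by
    rw [← Nat.card_zpowers, ht, Subgroup.card_top, hcard]
  have hdvd2 : ∀ k k' : ℤ, (QuotientGroup.mk t : G ⧸ A) ^ k = (QuotientGroup.mk t : G ⧸ A) ^ k' →
      (p : ℤ) ∣ (k - k') := by
    intro k k' hkk
    have h1 : (QuotientGroup.mk t : G ⧸ A) ^ (k - k') = 1 := by
      rw [zpow_sub, hkk, mul_inv_cancel]
    have h2 : ((orderOf (QuotientGroup.mk t : G ⧸ A) : ℤ)) ∣ (k - k') :=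
      orderOf_dvd_iff_zpow_eq_one.mpr h1
    rw [horder_t] at h2
    refine dvd_trans ?_ h2
    exact_mod_cast dvd_pow_self p hn
  have hE : ∀ g : G, ∃ k : ℤ, (QuotientGroup.mk g : G ⧸ A) = (QuotientGroup.mk t : G ⧸ A) ^ k := by
    intro g
    have : (QuotientGroup.mk g : G ⧸ A) ∈ Subgroup.zpowers (QuotientGroup.mk t : G ⧸ A) := by
      rw [ht]; exact Subgroup.mem_top _
    obtain ⟨k, hk⟩ := Subgroup.mem_zpowers_iff.mp this
    exact ⟨k, hk.symm⟩
  set E : G → ℤ := fun g => (hE g).choose with hEdef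
  have hEs : ∀ g : G, (QuotientGroup.mk g : G ⧸ A) = (QuotientGroup.mk t : G ⧸ A) ^ (E g) :=
    fun g => (hE g).choose_spec
  have hker : ∀ g : G, (QuotientGroup.mk g : G ⧸ A) = 1 ↔ g ∈ A := fun g =>
    QuotientGroup.eq_one_iff g
  -- conjugation of S k by any group element
  have hgconj : ∀ (g : G) (k : ℤ), g⁻¹ * S k * g = (t ^ (E g))⁻¹ * S k * t ^ (E g) := by
    intro g k
    have hbA : g * (t ^ (E g))⁻¹ ∈ A := by
      rw [← hker]
      have : (QuotientGroup.mk (g * (t ^ (E g))⁻¹) : G ⧸ A)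
          = (QuotientGroup.mk g : G ⧸ A) * ((QuotientGroup.mk t : G ⧸ A) ^ (E g))⁻¹ := by
        simp [QuotientGroup.mk_mul, QuotientGroup.mk_inv, QuotientGroup.mk_zpow]
      rw [this, hEs g, mul_inv_cancel]
    have hcb : S k * (g * (t ^ (E g))⁻¹) = (g * (t ^ (E g))⁻¹) * S k :=
      hcomm _ (s_mem k) _ hbA
    have expand : g⁻¹ * S k * g
        = (t ^ (E g))⁻¹ * ((g * (t ^ (E g))⁻¹)⁻¹ * S k * (g * (t ^ (E g))⁻¹)) * t ^ (E g) := by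
      group
    rw [expand]
    have : (g * (t ^ (E g))⁻¹)⁻¹ * S k * (g * (t ^ (E g))⁻¹) = S k := by
      rw [mul_assoc, hcb, ← mul_assoc, inv_mul_cancel, one_mul]
    rw [this]
  -- the automorphism φ
  set φ : G → G := fun g => g * S (E g) with hφ
  have hEadd : ∀ g g' : G, (p : ℤ) ∣ (E (g * g') - (E g + E g')) := by
    intro g g'
    apply hdvd2
    rw [← hEs (g * g'), zpow_add, ← hEs g, ← hEs g', QuotientGroup.mk_mul]
  have hmul : ∀ g g' : G, φ (g * g') = φ g * φ g' := by
    intro g g'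
    have e1 : φ g * φ g' = (g * g') * (((t ^ (E g'))⁻¹ * S (E g) * t ^ (E g')) * S (E g')) := by
      simp only [hφ]
      rw [← hgconj g' (E g)]
      group
    rw [e1, s_cocycle]
    simp only [hφ]
    rw [s_congr _ _ (hEadd g g')]
  have hmkφ : ∀ g : G, (QuotientGroup.mk (φ g) : G ⧸ A) = QuotientGroup.mk g := by
    intro g
    simp only [hφ]
    rw [QuotientGroup.mk_mul, (hker _).mpr (s_mem _), mul_one]
  have hinj : Function.Injective φ := by
    intro g g' hgg
    have hq : (QuotientGroup.mk g : G ⧸ A) = QuotientGroup.mk g' := by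
      rw [← hmkφ g, ← hmkφ g', hgg]
    have hsE : S (E g) = S (E g') := by
      apply s_congr
      apply hdvd2
      rw [← hEs g, ← hEs g', hq]
    simp only [hφ] at hgg
    rw [hsE] at hgg
    exact mul_right_cancel hgg
  set φM : G →* G := MonoidHom.mk' φ hmul with hφM
  have hφMinj : Function.Injective φM := hinj
  set φe : G ≃* G := MulEquiv.ofBijective φM (Finite.injective_iff_bijective.mp hφMinj) with hφe
  obtain ⟨H, hH⟩ := h φe
  have hmem : ∀ v : G, v ∈ H ↔ ∃ g : G, v = g⁻¹ * φ g := by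
    intro v
    rw [← SetLike.mem_coe, hH]
    exact Iff.rfl
  have htconj : ∀ g : G, g⁻¹ * φ g = S (E g) := by
    intro g
    simp only [hφ]
    rw [← mul_assoc, inv_mul_cancel, one_mul]
  have hs1 : S 1 ∈ H := by
    rw [hmem]
    refine ⟨t, ?_⟩
    rw [htconj t]
    apply s_congr
    apply hdvd2
    rw [← hEs t, zpow_one]
  have hs11 : S 1 * S 1 ∈ H := H.mul_mem hs1 hs1
  obtain ⟨g, hg⟩ := (hmem _).mp hs11
  rw [htconj g] at hg
  set k : ℤ := E g with hk
  -- Now hg : S 1 * S 1 = S k.  Derive the contradiction.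
  have hprod : ∀ i j : ℤ, (a ^ (1:ℤ) * y ^ i) * (a ^ (1:ℤ) * y ^ j) = a ^ (2:ℤ) * y ^ (i + j) := by
    intro i j
    calc a ^ (1:ℤ) * y ^ i * (a ^ (1:ℤ) * y ^ j)
        = a ^ (1:ℤ) * (y ^ i * a ^ (1:ℤ)) * y ^ j := by group
      _ = a ^ (1:ℤ) * (a ^ (1:ℤ) * y ^ i) * y ^ j := by rw [(hcay.zpow_zpow 1 i).symm.eq]
      _ = a ^ (2:ℤ) * y ^ (i + j) := by
          rw [show ((2:ℤ)) = 1 + 1 by norm_num, zpow_add, zpow_add]; group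
  have hSk : S k = a ^ k * y ^ (k * (k + 1)) := by simp only [hS]
  have hS1 : S 1 = a ^ (1:ℤ) * y ^ (2:ℤ) := by simp only [hS]; norm_num
  have E1 : a ^ (2:ℤ) * y ^ (4:ℤ) = a ^ k * y ^ (k * (k + 1)) := by
    rw [← hSk, ← hg, hS1, hprod 2 2]
    norm_num
  have E2 : a ^ (2:ℤ) * y ^ (8:ℤ) = a ^ k * y ^ (k * (k + 1) + 2 * k) := by
    have l2 := congrArg (fun z => (t ^ (1:ℤ))⁻¹ * z * t ^ (1:ℤ)) hg
    have l3 : (t ^ (1:ℤ))⁻¹ * (S 1 * S 1) * t ^ (1:ℤ)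
        = ((t ^ (1:ℤ))⁻¹ * S 1 * t ^ (1:ℤ)) * ((t ^ (1:ℤ))⁻¹ * S 1 * t ^ (1:ℤ)) := by group
    rw [l3, KS 1 1, KS k 1, hprod] at l2
    have e4 : (1:ℤ) * (1 + 1) + 2 * 1 * 1 + (1 * (1 + 1) + 2 * 1 * 1) = 8 := by norm_num
    have e5 : k * (k + 1) + 2 * 1 * k = k * (k + 1) + 2 * k := by ring
    rw [e4, e5] at l2
    exact l2
  -- extract exponent congruences
  have hyk : y ^ (2 * k - 4) = 1 := by
    have l6 : y ^ (4:ℤ) = (a ^ (2:ℤ) * y ^ (4:ℤ))⁻¹ * (a ^ (2:ℤ) * y ^ (8:ℤ)) := by group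
    rw [E1, E2] at l6
    have l7 : (a ^ k * y ^ (k * (k + 1)))⁻¹ * (a ^ k * y ^ (k * (k + 1) + 2 * k)) = y ^ (2 * k) := by
      group
    rw [l7] at l6
    rw [zpow_sub, ← l6, mul_inv_cancel]
  have hdvdk : (p : ℤ) ∣ (k - 2) := by
    have l8 : ((orderOf y : ℤ)) ∣ (2 * k - 4) := orderOf_dvd_iff_zpow_eq_one.mpr hyk
    rw [hordery] at l8
    have l9 : (p : ℤ) ∣ 2 * (k - 2) := by
      have : 2 * k - 4 = 2 * (k - 2) := by ring
      rwa [this] at l8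
    have hpint : Prime (p : ℤ) := Nat.prime_iff_prime_int.mp hp
    rcases (hpint.dvd_mul.mp l9) with h2 | hk2
    · exfalso
      have hple : (p : ℤ) ≤ 2 := Int.le_of_dvd (by norm_num) h2
      have : p = 2 := by
        have := hp.two_le
        omega
      rw [this] at hm
      omega
    · exact hk2
  -- finish
  have hak : a ^ k = a ^ (2:ℤ) := by
    have : a ^ k = a ^ ((2:ℤ) + (k - 2)) := by ring_nf
    rw [this, zpow_add, hkill a hap _ hdvdk, mul_one]
  have hy2 : y ^ (k * (k + 1) - 4) = 1 := by
    rw [hak] at E1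
    have := mul_left_cancel E1
    rw [zpow_sub, ← this, mul_inv_cancel]
  have hdvd4 : (p : ℤ) ∣ (k * (k + 1) - 4) := by
    have := orderOf_dvd_iff_zpow_eq_one.mpr hy2
    rwa [hordery] at this
  have hfinal : (p : ℤ) ∣ 2 := by
    have heq2 : (k * (k + 1) - 4) - (k - 2) * (k + 3) = 2 := by ring
    have := dvd_sub hdvd4 (hdvdk.mul_right (k + 3))
    rwa [heq2] at this
  have hple : (p : ℤ) ≤ 2 := Int.le_of_dvd (by norm_num) hfinal
  have := hp.two_le
  omega


private lemma AddMonoid_End_sub_apply' {M : Type*} [AddCommGroup M] (f g : AddMonoid.End M)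
    (x : M) : (f - g) x = f x - g x := rfl

private lemma aux_reduce {G : Type*} [Group G] (p : ℕ) (hp : p.Prime)
    (A : Subgroup G) [hA : A.Normal]
    (hcomm : ∀ a ∈ A, ∀ b ∈ A, a * b = b * a)
    (n : ℕ) (t : G) (htpn : t ^ (p ^ n) ∈ A)
    (a0 : G) (ha0A : a0 ∈ A) (ha0p : a0 ^ p = 1) (hne : t⁻¹ * a0 * t ≠ a0) :
    ∃ a x : G, a ∈ A ∧ a ^ p = 1 ∧ x ∈ A ∧ x ^ p = 1 ∧ x ≠ 1 ∧
      t⁻¹ * a * t = a * x ∧ t⁻¹ * x * t = x := by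
  haveI := Fact.mk hp
  -- the subgroup of p-torsion elements of A
  set V : Subgroup G := {
    carrier := {g : G | g ∈ A ∧ g ^ p = 1}
    one_mem' := ⟨A.one_mem, one_pow p⟩
    mul_mem' := fun {u v} hu hv => ⟨A.mul_mem hu.1 hv.1, by
      rw [(show Commute u v from hcomm u hu.1 v hv.1).mul_pow, hu.2, hv.2, one_mul]⟩
    inv_mem' := fun {u} hu => ⟨A.inv_mem hu.1, by rw [inv_pow, hu.2, inv_one]⟩ } with hV
  have hmemV : ∀ g : G, g ∈ V ↔ g ∈ A ∧ g ^ p = 1 := fun g => Iff.rfl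
  letI instV : CommGroup ↥V :=
    { (inferInstance : Group ↥V) with
      mul_comm := fun u v => Subtype.ext (hcomm u u.2.1 v v.2.1) }
  -- conjugation by t as an automorphism of V
  have hσmem : ∀ g : G, g ∈ V → t⁻¹ * g * t ∈ V := by
    intro g hg
    refine ⟨?_, ?_⟩
    · have := hA.conj_mem g hg.1 t⁻¹
      rwa [inv_inv] at this
    · have h1 : t⁻¹ * g * t = t⁻¹ * g * (t⁻¹)⁻¹ := by rw [inv_inv]
      rw [h1, conj_pow, hg.2]; group
  set σV : ↥V →* ↥V := {
    toFun := fun v => ⟨t⁻¹ * ↑v * t, hσmem _ v.2⟩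
    map_one' := by ext; simp
    map_mul' := fun u v => by
      ext
      push_cast
      group } with hσV
  -- pass to the additive endomorphism ring
  set M := Additive ↥V with hM
  set σE : AddMonoid.End M := MonoidHom.toAdditive σV with hσE
  have ha0ne : a0 ≠ 1 := by
    intro hh
    apply hne
    rw [hh]; group
  set v0 : M := Additive.ofMul (⟨a0, (hmemV a0).mpr ⟨ha0A, ha0p⟩⟩ : ↥V) with hv0
  -- coercion to G
  have coeG : ∀ v : M, G := fun v => ((Additive.toMul v : ↥V) : G)
  have happly : ∀ (c : ℕ) (v : M), ((c : AddMonoid.End M)) v = c • v :=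
    fun c v => AddMonoid.End.natCast_apply c v
  have hG_of_eq : ∀ v w : M, ((Additive.toMul v : ↥V) : G) = ((Additive.toMul w : ↥V) : G) → v = w := by
    intro v w hvw
    exact Additive.toMul.injective (Subtype.ext hvw)
  have hsmul_coe : ∀ (c : ℕ) (v : M),
      ((Additive.toMul (c • v) : ↥V) : G) = ((Additive.toMul v : ↥V) : G) ^ c := by
    intro c v
    rw [toMul_nsmul]
    push_cast
    rfl
  letI : CharP (AddMonoid.End M) p := by
    constructor
    intro c
    constructor
    · intro hc
      have h1 : ((c : AddMonoid.End M)) v0 = 0 := by rw [hc]; rfl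
      rw [happly] at h1
      have h2 : ((Additive.toMul (c • v0) : ↥V) : G) = 1 := by
        rw [h1]; rfl
      rw [hsmul_coe] at h2
      have h3 : a0 ^ c = 1 := h2
      have h4 : orderOf a0 ∣ c := orderOf_dvd_of_pow_eq_one h3
      rwa [orderOf_eq_prime ha0p ha0ne] at h4
    · rintro ⟨d, rfl⟩
      apply AddMonoid.End.ext
      intro v
      rw [happly, AddMonoid.End.zero_apply]
      apply hG_of_eq
      rw [hsmul_coe]
      have : ((Additive.toMul v : ↥V) : G) ^ p = 1 := (Additive.toMul v).2.2
      rw [pow_mul, this, one_pow]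
      rfl
  -- σE has p-power order
  have hit : ∀ (c : ℕ) (v : M),
      ((Additive.toMul ((σE ^ c) v) : ↥V) : G) = (t ^ c)⁻¹ * ((Additive.toMul v : ↥V) : G) * t ^ c := by
    intro c
    induction c with
    | zero => intro v; simp
    | succ c ih =>
      intro v
      rw [pow_succ']
      have h1 : ((σE * σE ^ c) v) = σE ((σE ^ c) v) := rfl
      rw [h1]
      have h2 : ((Additive.toMul (σE ((σE ^ c) v)) : ↥V) : G)
          = t⁻¹ * ((Additive.toMul ((σE ^ c) v) : ↥V) : G) * t := rfl
      rw [h2, ih v, pow_succ]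
      group
  have hσq : σE ^ (p ^ n) = 1 := by
    apply AddMonoid.End.ext
    intro v
    apply hG_of_eq
    rw [hit]
    have hcm := hcomm _ (Additive.toMul v).2.1 _ htpn
    rw [mul_assoc, hcm, ← mul_assoc, inv_mul_cancel, one_mul]
    rfl
  -- nilpotency of σE - 1
  set u : AddMonoid.End M := σE - 1 with hu
  have hun : u ^ (p ^ n) = 0 := by
    have hb := sub_pow_char_pow_of_commute p n (Commute.one_right σE)
    rw [one_pow, hσq, sub_self] at hb
    exact hb
  -- descent to an element with u w ≠ 0 and u (u w) = 0
  have descent : ∀ (c : ℕ) (v : M), (u ^ c) v = 0 → u v ≠ 0 →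
      ∃ w : M, u w ≠ 0 ∧ u (u w) = 0 := by
    intro c
    induction c with
    | zero =>
      intro v h0 h1
      exfalso
      apply h1
      rw [pow_zero] at h0
      have hv : v = 0 := h0
      rw [hv, map_zero]
    | succ c ih =>
      intro v h0 h1
      by_cases hc2 : u (u v) = 0
      · exact ⟨v, h1, hc2⟩
      · refine ih (u v) ?_ hc2
        rw [pow_succ] at h0
        exact h0
  have hu0 : u v0 ≠ 0 := by
    intro hh
    rw [hu, AddMonoid_End_sub_apply'] at hh
    have h1 : σE v0 = (1 : AddMonoid.End M) v0 := by
      rw [sub_eq_zero] at hh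
      exact hh
    apply hne
    have h2 := congrArg (fun z : M => ((Additive.toMul z : ↥V) : G)) h1
    exact h2
  obtain ⟨w, hw1, hw2⟩ := descent (p ^ n) v0 (by rw [hun]; rfl) hu0
  -- extract the elements a and x
  set a : G := ((Additive.toMul w : ↥V) : G) with ha
  set x : G := ((Additive.toMul (u w) : ↥V) : G) with hx
  have hxcoe : x = (t⁻¹ * a * t) / a := by
    rw [hx, hu, AddMonoid_End_sub_apply', toMul_sub]
    push_cast
    rfl
  have haA : a ∈ A := (Additive.toMul w).2.1
  have hap : a ^ p = 1 := (Additive.toMul w).2.2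
  have hxA : x ∈ A := (Additive.toMul (u w)).2.1
  have hxp : x ^ p = 1 := (Additive.toMul (u w)).2.2
  have hx1 : x ≠ 1 := by
    intro hh
    apply hw1
    apply hG_of_eq
    rw [← hx] at *
    rw [hh]
    rfl
  have hxdef : t⁻¹ * a * t = a * x := by
    rw [hxcoe]
    have hcm := hcomm a haA _ (by rw [hxcoe] at hxA; exact hxA)
    rw [hcm, div_eq_mul_inv]; group
  have hxt : t⁻¹ * x * t = x := by
    have h0 := hw2
    rw [hu, AddMonoid_End_sub_apply', sub_eq_zero] at h0
    have h1 : σE (u w) = u w := h0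
    have h2 := congrArg (fun z : M => ((Additive.toMul z : ↥V) : G)) h1
    exact h2
  exact ⟨a, x, haA, hap, hxA, hxp, hx1, hxdef, hxt⟩



theorem stmt_17 {G : Type*} [Group G] [Finite G] (p : ℕ) (hp : p.Prime) (hodd : Odd p)
    (A : Subgroup G) (hA : A.Normal) (hpgroup : IsPGroup p A)
    (hcomm : ∀ a ∈ A, ∀ b ∈ A, a * b = b * a)
    (n : ℕ) (hcard : Nat.card (G ⧸ A) = p ^ n)
    (t : G) (ht : Subgroup.zpowers (QuotientGroup.mk t : G ⧸ A) = ⊤)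
    (h : ∀ φ : G ≃* G, ∃ H : Subgroup G, (H : Set G) = twistedClassAut φ) :
    ∀ a ∈ A, a ^ p = 1 → t⁻¹ * a * t = a := by
  haveI := hA
  intro a0 ha0A ha0p
  by_contra hne
  -- the case n = 0 : everything lies in A and hence commutes
  rcases Nat.eq_zero_or_pos n with hn0 | hnpos
  · subst hn0
    rw [pow_zero] at hcard
    haveI : Subsingleton (G ⧸ A) := (Nat.card_eq_one_iff_unique.mp hcard).1
    have htA : t ∈ A := (QuotientGroup.eq_one_iff t).mp (Subsingleton.elim _ _)
    apply hne
    have hcm := hcomm a0 ha0A t htA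
    rw [mul_assoc, hcm, ← mul_assoc, inv_mul_cancel, one_mul]
  have hn : n ≠ 0 := Nat.pos_iff_ne_zero.mp hnpos
  -- t ^ (p ^ n) lies in A
  have horder_t : orderOf (QuotientGroup.mk t : G ⧸ A) = p ^ n := by
    rw [← Nat.card_zpowers, ht, Subgroup.card_top, hcard]
  have htpn : t ^ (p ^ n) ∈ A := by
    rw [← QuotientGroup.eq_one_iff, QuotientGroup.mk_pow, ← horder_t, pow_orderOf_eq_one]
  obtain ⟨a, x, haA, hap, hxA, hxp, hx1, hxdef, hxt⟩ :=
    aux_reduce p hp A hcomm n t htpn a0 ha0A ha0p hne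
  exact aux_main p hp hodd A hcomm n hn hcard t ht h a x haA hap hxA hxp hx1 hxdef hxt
end

section
/- Let p be an odd prime, let G be a finite group with a normal abelian p-subgroup A such that the quotient G/A is cyclic of order pⁿ, and let t ∈ G be an element whose image in G/A generates G/A. Suppose that for every automorphism φ of G the twisted conjugacy class [e]_φ = {g⁻¹·φ(g) : g ∈ G} is a subgroup of G. Define θ: A → A by θ(a) = a⁻¹·(t⁻¹at). Then θ is a group homomorphism, θ(a)^{pⁿ} = e for every a ∈ A, and for every 1 ≤ k ≤ n and every a ∈ A with a^{p^k} = e one has θ(a)^{p^{k−1}} = e. -/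
private lemma nilpo {M : Type*} [CommGroup M] (ψ : M →* M) (p e : ℕ) (hp : p.Prime)
    (hodd : Odd p) (x : M) (hx : x ^ p = 1) (hfix : ψ^[p ^ e] x = x) :
    (fun y => y⁻¹ * ψ y)^[p ^ e] x = 1 := by
  set m := p ^ e with hm
  have hmpos : 0 < m := pow_pos hp.pos e
  have hmodd : Odd m := hodd.pow
  let F : AddMonoid.End (Additive M) := MonoidHom.toAdditive ψ
  have hFapp : ∀ z : M, F (Additive.ofMul z) = Additive.ofMul (ψ z) := fun z => rfl
  have hpow : ∀ (k : ℕ) (y : M), (F ^ k) (Additive.ofMul y) = Additive.ofMul (ψ^[k] y) := by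
    intro k
    induction k with
    | zero => intro y; rfl
    | succ k ih =>
      intro y
      rw [pow_succ']
      show F ((F ^ k) (Additive.ofMul y)) = _
      rw [ih y, hFapp, Function.iterate_succ_apply']
  have htor : (p : ℕ) • (Additive.ofMul x) = 0 := by
    show Additive.ofMul (x ^ p) = 0
    rw [hx]; rfl
  have hcomm : Commute F (-1 : AddMonoid.End (Additive M)) := (Commute.one_right F).neg_right
  have key : ((F - 1) ^ m) (Additive.ofMul x) = 0 := by
    rw [sub_eq_add_neg, hcomm.add_pow m]
    rw [show ∀ (s : Finset ℕ) (f : ℕ → AddMonoid.End (Additive M)) (v : Additive M), (∑ i ∈ s, f i) v = ∑ i ∈ s, f i v from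
      fun s f v => AddMonoidHom.finset_sum_apply (fun i => (f i : Additive M →+ Additive M)) s v]
    have hzero : ∀ j ∈ Finset.range m, j ≠ 0 →
        (F ^ j * (-1) ^ (m - j) * ↑(m.choose j)) (Additive.ofMul x) = 0 := by
      intro j hj hj0
      have hjm : j ≠ m := Nat.ne_of_lt (Finset.mem_range.mp hj)
      obtain ⟨d, hd⟩ := hp.dvd_choose_pow hj0 (hm ▸ hjm)
      show (F ^ j) (((-1) ^ (m - j) * ↑(m.choose j) : AddMonoid.End (Additive M)) (Additive.ofMul x)) = 0
      have : ((-1) ^ (m - j) * ↑(m.choose j) : AddMonoid.End (Additive M)) (Additive.ofMul x) = 0 := by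
        show ((-1 : AddMonoid.End (Additive M)) ^ (m - j)) ((↑(m.choose j) : AddMonoid.End (Additive M)) (Additive.ofMul x)) = 0
        rw [AddMonoid.End.natCast_apply, hd, mul_comm p d, mul_smul, htor, smul_zero, map_zero]
      rw [this, map_zero]
    rw [Finset.sum_range_succ, Finset.sum_eq_single_of_mem 0 (Finset.mem_range.mpr hmpos) hzero]
    have hneg : ((-1 : AddMonoid.End (Additive M)) ^ m) = -1 := by
      have := Odd.neg_one_pow (α := AddMonoid.End (Additive M)) hmodd
      exact this
    have h1 : ((F ^ 0 * (-1) ^ (m - 0) * ↑(m.choose 0) : AddMonoid.End (Additive M))) (Additive.ofMul x) = -(Additive.ofMul x) := by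
      rw [pow_zero, one_mul, Nat.choose_zero_right, Nat.cast_one, mul_one, Nat.sub_zero, hneg]
      rfl
    have h2 : ((F ^ m * (-1) ^ (m - m) * ↑(m.choose m) : AddMonoid.End (Additive M))) (Additive.ofMul x) = Additive.ofMul x := by
      rw [Nat.sub_self, pow_zero, mul_one, Nat.choose_self, Nat.cast_one, mul_one, hpow, hfix]
    rw [h1, h2, neg_add_cancel]
  have hDit : ∀ (k : ℕ) (y : M),
      ((F - 1) ^ k) (Additive.ofMul y) = Additive.ofMul ((fun z => z⁻¹ * ψ z)^[k] y) := by
    intro k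
    induction k with
    | zero => intro y; rfl
    | succ k ih =>
      intro y
      rw [pow_succ']
      show (F - 1) (((F - 1) ^ k) (Additive.ofMul y)) = _
      rw [ih y, Function.iterate_succ_apply']
      erw [AddMonoidHom.sub_apply]
      show Additive.ofMul (ψ ((fun z => z⁻¹ * ψ z)^[k] y)) - Additive.ofMul ((fun z => z⁻¹ * ψ z)^[k] y) = _
      rw [← ofMul_div]
      exact congrArg Additive.ofMul (by rw [div_eq_mul_inv, mul_comm])
  have := key
  rw [hDit m x] at this
  have : ((fun z => z⁻¹ * ψ z)^[m] x) = 1 := by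
    have h0 : Additive.ofMul ((fun z => z⁻¹ * ψ z)^[m] x) = Additive.ofMul (1 : M) := this
    exact Additive.ofMul.injective h0
  exact this

set_option maxHeartbeats 3200000 in
theorem stmt_18 {G : Type*} [Group G] [Finite G] (p : ℕ) (hp : p.Prime) (hodd : Odd p)
    (A : Subgroup G) (hA : A.Normal) (hpgroup : IsPGroup p A)
    (hcomm : ∀ a ∈ A, ∀ b ∈ A, a * b = b * a)
    (n : ℕ) (hcard : Nat.card (G ⧸ A) = p ^ n)
    (t : G) (ht : Subgroup.zpowers (QuotientGroup.mk t : G ⧸ A) = ⊤)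
    (h : ∀ φ : G ≃* G, ∃ H : Subgroup G, (H : Set G) = twistedClassAut φ)
    (θ : G → G) (hθ : ∀ a : G, θ a = a⁻¹ * (t⁻¹ * a * t)) :
    (∀ a ∈ A, θ a ∈ A) ∧
    (∀ a ∈ A, ∀ b ∈ A, θ (a * b) = θ a * θ b) ∧
    (∀ a ∈ A, θ a ^ p ^ n = 1) ∧
    (∀ k : ℕ, 1 ≤ k → k ≤ n → ∀ a ∈ A, a ^ p ^ k = 1 → θ a ^ p ^ (k - 1) = 1) := by
  haveI : Fact p.Prime := ⟨hp⟩
  have hppos : 0 < p ^ n := pow_pos hp.pos n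
  -- order of the image of t
  have hord : orderOf (QuotientGroup.mk t : G ⧸ A) = p ^ n := by
    rw [← Nat.card_zpowers, ht, Subgroup.card_top, hcard]
  -- t ^ p ^ n lies in A
  have htpn : t ^ p ^ n ∈ A := by
    have h1 : ((QuotientGroup.mk t : G ⧸ A)) ^ (p ^ n) = 1 := by
      rw [← hord]; exact pow_orderOf_eq_one _
    have h2 : (QuotientGroup.mk (t ^ p ^ n) : G ⧸ A) = 1 := by
      have h3 := map_pow (QuotientGroup.mk' A) t (p ^ n)
      rw [show (QuotientGroup.mk' A) t = QuotientGroup.mk t from rfl] at h3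
      rw [show (QuotientGroup.mk' A) (t ^ p ^ n) = QuotientGroup.mk (t ^ p ^ n) from rfl] at h3
      rw [h3, h1]
    rwa [QuotientGroup.eq_one_iff] at h2
  -- discrete log
  have hlog : ∀ g : G, ∃ i : ℕ, (t ^ i)⁻¹ * g ∈ A := by
    intro g
    have hmem : (QuotientGroup.mk g : G ⧸ A) ∈ Subgroup.zpowers (QuotientGroup.mk t : G ⧸ A) := by
      rw [ht]; exact Subgroup.mem_top _
    obtain ⟨z, hz⟩ := hmem
    set q : G ⧸ A := QuotientGroup.mk t with hq
    have hpn0 : ((p ^ n : ℕ) : ℤ) ≠ 0 := by positivity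
    set i : ℕ := (z % ((p ^ n : ℕ) : ℤ)).toNat with hi
    refine ⟨i, ?_⟩
    have hnn : 0 ≤ z % ((p ^ n : ℕ) : ℤ) := Int.emod_nonneg z hpn0
    have h2 : q ^ (i : ℤ) = q ^ z := by
      rw [hi, Int.toNat_of_nonneg hnn, ← hord, zpow_mod_orderOf]
    rw [zpow_natCast] at h2
    have h4 : (QuotientGroup.mk (t ^ i) : G ⧸ A) = q ^ i := by
      have h3 := map_pow (QuotientGroup.mk' A) t i
      rw [show (QuotientGroup.mk' A) t = QuotientGroup.mk t from rfl] at h3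
      rw [show (QuotientGroup.mk' A) (t ^ i) = QuotientGroup.mk (t ^ i) from rfl] at h3
      rw [h3, hq]
    have h5 : (QuotientGroup.mk (t ^ i) : G ⧸ A) = QuotientGroup.mk g := by
      rw [h4, h2]; exact hz
    exact QuotientGroup.eq.mp h5
  -- log is unique mod p^n
  have hmodeq : ∀ (g : G) (i j : ℕ), (t ^ i)⁻¹ * g ∈ A → (t ^ j)⁻¹ * g ∈ A →
      i % p ^ n = j % p ^ n := by
    intro g i j hi hj
    have h1 : (t ^ j)⁻¹ * t ^ i ∈ A := by
      have := A.mul_mem hj (A.inv_mem hi)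
      have heq : (t ^ j)⁻¹ * g * ((t ^ i)⁻¹ * g)⁻¹ = (t ^ j)⁻¹ * t ^ i := by group
      rwa [heq] at this
    have h2 : (QuotientGroup.mk t : G ⧸ A) ^ i = (QuotientGroup.mk t : G ⧸ A) ^ j := by
      have h3 := QuotientGroup.eq.mpr h1
      simpa using h3.symm
    have h4 := pow_eq_pow_iff_modEq.mp h2
    rw [hord] at h4
    exact h4
  -- Part 1
  have part1 : ∀ a ∈ A, θ a ∈ A := by
    intro a ha
    rw [hθ]
    refine A.mul_mem (A.inv_mem ha) ?_
    have := hA.conj_mem a ha t⁻¹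
    simpa using this
  -- Part 2
  have part2 : ∀ a ∈ A, ∀ b ∈ A, θ (a * b) = θ a * θ b := by
    intro a ha b hb
    rw [hθ, hθ, hθ]
    have h1 : a⁻¹ * (t⁻¹ * a * t) ∈ A := by have := part1 a ha; rwa [hθ] at this
    have h2 : b⁻¹ * (a⁻¹ * (t⁻¹ * a * t)) = (a⁻¹ * (t⁻¹ * a * t)) * b⁻¹ :=
      hcomm _ (A.inv_mem hb) _ h1
    calc (a * b)⁻¹ * (t⁻¹ * (a * b) * t)
        = b⁻¹ * (a⁻¹ * (t⁻¹ * a * t)) * (t⁻¹ * b * t) := by group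
      _ = (a⁻¹ * (t⁻¹ * a * t)) * b⁻¹ * (t⁻¹ * b * t) := by rw [h2]
      _ = a⁻¹ * (t⁻¹ * a * t) * (b⁻¹ * (t⁻¹ * b * t)) := by group
  have hconjpn : ∀ X ∈ A, (t ^ p ^ n)⁻¹ * X * t ^ p ^ n = X := by
    intro X hx
    rw [mul_assoc, hcomm _ hx _ htpn]
    group
  -- Part 3
  have part3 : ∀ a ∈ A, θ a ^ p ^ n = 1 := by
    intro a ha
    obtain ⟨H, hH⟩ := h (MulAut.conj a⁻¹)
    set u : ℕ → G := fun i => (t ^ i)⁻¹ * a⁻¹ * t ^ i * a with hu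
    have huA : ∀ i, u i ∈ A := by
      intro i
      refine A.mul_mem ?_ ha
      have := hA.conj_mem a⁻¹ (A.inv_mem ha) (t ^ i)⁻¹
      simpa [mul_assoc] using this
    have humem : ∀ i, u i ∈ H := by
      intro i
      have : u i ∈ (H : Set G) := by
        rw [hH]
        exact ⟨t ^ i, by simp [hu, MulAut.conj_apply]; group⟩
      exact this
    have hrev : ∀ y ∈ H, ∃ i : ℕ, y = u i := by
      intro y hy
      have : y ∈ (H : Set G) := hy
      rw [hH] at this
      obtain ⟨g, hg⟩ := this
      obtain ⟨i, hci⟩ := hlog g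
      refine ⟨i, ?_⟩
      set c := (t ^ i)⁻¹ * g with hc
      have hgc : g = t ^ i * c := by rw [hc]; group
      have hX : (t ^ i)⁻¹ * a⁻¹ * t ^ i ∈ A := by
        have := hA.conj_mem a⁻¹ (A.inv_mem ha) (t ^ i)⁻¹
        simpa [mul_assoc] using this
      have hcX : c⁻¹ * ((t ^ i)⁻¹ * a⁻¹ * t ^ i) * c = (t ^ i)⁻¹ * a⁻¹ * t ^ i := by
        rw [mul_assoc, hcomm _ hX _ hci]
        group
      calc y = g⁻¹ * (a⁻¹ * g * a) := by rw [hg]; simp only [MulAut.conj_apply]; group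
        _ = c⁻¹ * ((t ^ i)⁻¹ * a⁻¹ * t ^ i) * c * a := by rw [hgc]; group
        _ = ((t ^ i)⁻¹ * a⁻¹ * t ^ i) * a := by rw [hcX]
        _ = u i := by rw [hu]
    have hXmem : ∀ i : ℕ, (t ^ i)⁻¹ * a⁻¹ * t ^ i ∈ A := by
      intro i
      have := hA.conj_mem a⁻¹ (A.inv_mem ha) (t ^ i)⁻¹
      simpa [mul_assoc] using this
    have hstep : ∀ X : G, X ∈ A → (t ^ p ^ n)⁻¹ * X * t ^ p ^ n = X := by
      intro X hx
      rw [mul_assoc, hcomm _ hx _ htpn]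
      group
    have hperiod : ∀ i, u (i + p ^ n) = u i := by
      intro i
      show (t ^ (i + p ^ n))⁻¹ * a⁻¹ * t ^ (i + p ^ n) * a = u i
      have e1 : (t ^ (i + p ^ n))⁻¹ * a⁻¹ * t ^ (i + p ^ n)
          = (t ^ p ^ n)⁻¹ * ((t ^ i)⁻¹ * a⁻¹ * t ^ i) * t ^ p ^ n := by
        rw [pow_add]; group
      rw [e1, hstep _ (hXmem i)]
    have hrep : ∀ q r : ℕ, u (r + p ^ n * q) = u r := by
      intro q
      induction q with
      | zero => intro r; simp
      | succ q ih =>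
        intro r
        have e2 : r + p ^ n * (q + 1) = (r + p ^ n * q) + p ^ n := by ring
        rw [e2, hperiod, ih]
    have hmod : ∀ i, u i = u (i % p ^ n) := by
      intro i
      conv_lhs => rw [show i = i % p ^ n + p ^ n * (i / p ^ n) from (Nat.mod_add_div i (p ^ n)).symm]
      exact hrep _ _
    have hsurj : Function.Surjective (fun i : Fin (p ^ n) => (⟨u i, humem i⟩ : H)) := by
      rintro ⟨y, hy⟩
      obtain ⟨i, rfl⟩ := hrev y hy
      refine ⟨⟨i % p ^ n, Nat.mod_lt _ hppos⟩, ?_⟩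
      exact Subtype.ext (hmod i).symm
    have hcardle : Nat.card H ≤ p ^ n := by
      have := Nat.card_le_card_of_surjective _ hsurj
      simpa using this
    have hle : H ≤ A := by
      intro y hy
      obtain ⟨i, rfl⟩ := hrev y hy
      exact huA i
    obtain ⟨M, hM⟩ := (hpgroup.to_le hle).exists_card_eq
    have hMn : M ≤ n := by
      have : p ^ M ≤ p ^ n := hM ▸ hcardle
      exact (pow_le_pow_iff_right₀ hp.one_lt).mp this
    have hθmem : θ a ∈ H := by
      have h1 : θ a = (u 1)⁻¹ := by
        rw [hθ]
        show _ = ((t ^ 1)⁻¹ * a⁻¹ * t ^ 1 * a)⁻¹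
        rw [pow_one]
        group
      rw [h1]; exact H.inv_mem (humem 1)
    have hz1 : (⟨θ a, hθmem⟩ : H) ^ Nat.card ↥H = 1 := pow_card_eq_one'
    have hG1 : θ a ^ p ^ M = 1 := by
      rw [hM] at hz1
      have := congrArg (Subtype.val) hz1
      simpa using this
    have hsplit : θ a ^ p ^ n = (θ a ^ p ^ M) ^ p ^ (n - M) := by
      rw [← pow_mul, ← pow_add, Nat.add_sub_cancel' hMn]
    rw [hsplit, hG1, one_pow]
  -- ====== Part 4 ======
  -- commutative group structure on A
  letI : CommGroup ↥A :=
    { (inferInstance : Group ↥A) with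
      mul_comm := fun x y => Subtype.ext (hcomm x.1 x.2 y.1 y.2) }
  have hconjmem : ∀ b ∈ A, t⁻¹ * b * t ∈ A := by
    intro b hb
    have := hA.conj_mem b hb t⁻¹
    simpa using this
  let ψ : ↥A →* ↥A :=
    { toFun := fun b => ⟨t⁻¹ * b.1 * t, hconjmem b.1 b.2⟩
      map_one' := Subtype.ext (by simp)
      map_mul' := fun b c => Subtype.ext (by
        show t⁻¹ * (b.1 * c.1) * t = (t⁻¹ * b.1 * t) * (t⁻¹ * c.1 * t)
        group) }
  have hψit : ∀ (k : ℕ) (b : ↥A), ((⇑ψ)^[k] b).1 = (t ^ k)⁻¹ * b.1 * t ^ k := by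
    intro k
    induction k with
    | zero => intro b; simp
    | succ k ih =>
      intro b
      rw [Function.iterate_succ_apply']
      show t⁻¹ * ((⇑ψ)^[k] b).1 * t = _
      rw [ih b, pow_succ]
      group
  have hθ1 : θ 1 = 1 := by rw [hθ]; group
  have hθpow : ∀ b ∈ A, ∀ j : ℕ, θ (b ^ j) = θ b ^ j := by
    intro b hb j
    induction j with
    | zero => simpa using hθ1
    | succ j ih =>
      rw [pow_succ, part2 _ (A.pow_mem hb j) _ hb, ih, pow_succ]
  -- descent towards a pair (a₀, x) with ψ x = x
  have descend : ∀ (M : ℕ) (y : ↥A), y ^ p = 1 → (fun w => w⁻¹ * ψ w)^[M] y = 1 →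
      (fun w => w⁻¹ * ψ w) y ≠ 1 →
      ∃ z : ↥A, z ^ p = 1 ∧ (fun w => w⁻¹ * ψ w) z ≠ 1 ∧
        (fun w => w⁻¹ * ψ w) ((fun w => w⁻¹ * ψ w) z) = 1 := by
    intro M
    induction M with
    | zero =>
      intro y hyp h0 h1
      exact absurd (by rw [show y = 1 from h0]; simp : (fun w => w⁻¹ * ψ w) y = 1) h1
    | succ M ih =>
      intro y hyp h0 h1
      by_cases hc : (fun w => w⁻¹ * ψ w) ((fun w => w⁻¹ * ψ w) y) = 1
      · exact ⟨y, hyp, h1, hc⟩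
      · refine ih ((fun w => w⁻¹ * ψ w) y) ?_ ?_ hc
        · show (y⁻¹ * ψ y) ^ p = 1
          rw [mul_pow, inv_pow, ← map_pow, hyp]
          simp
        · rw [← Function.iterate_succ_apply]
          exact h0
  -- base case : p-torsion elements are fixed by conjugation by t
  have base : 1 ≤ n → ∀ a ∈ A, a ^ p = 1 → θ a = 1 := by
    intro hn a ha hap
    by_contra hne
    have hyp : (⟨a, ha⟩ : ↥A) ^ p = 1 := Subtype.ext (by simpa using hap)
    have hfix : (⇑ψ)^[p ^ n] ⟨a, ha⟩ = ⟨a, ha⟩ := by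
      apply Subtype.ext
      rw [hψit]
      exact hconjpn a ha
    have hnil := nilpo ψ p n hp hodd (⟨a, ha⟩ : ↥A) hyp hfix
    have hD1 : (fun w => w⁻¹ * ψ w) (⟨a, ha⟩ : ↥A) ≠ 1 := by
      intro hcon
      apply hne
      have h1 := congrArg Subtype.val hcon
      have h2 : a⁻¹ * (t⁻¹ * a * t) = 1 := h1
      rw [hθ]
      exact h2
    obtain ⟨z, hzp, hz1, hz2⟩ := descend (p ^ n) ⟨a, ha⟩ hyp hnil hD1
    -- names
    set a₀ : G := z.1 with ha₀def
    have ha₀ : a₀ ∈ A := z.2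
    have ha₀p : a₀ ^ p = 1 := by
      have := congrArg Subtype.val hzp
      simpa using this
    set x : G := a₀⁻¹ * (t⁻¹ * a₀ * t) with hxdef
    have hxval : ((fun w => w⁻¹ * ψ w) z).1 = x := rfl
    have hx : x ≠ 1 := by
      intro hcon
      exact hz1 (Subtype.ext (by rw [hxval, hcon]; rfl))
    have hxA : x ∈ A := ((fun w => w⁻¹ * ψ w) z).2
    have hxfix : t⁻¹ * x * t = x := by
      have h1 := congrArg Subtype.val hz2
      have h2 : x⁻¹ * (t⁻¹ * x * t) = 1 := h1
      have h3 := congrArg (fun w => x * w) h2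
      simpa [mul_assoc] using h3
    have hxp : x ^ p = 1 := by
      have : θ a₀ = x := by rw [hθ]
      have h1 : θ (a₀ ^ p) = θ a₀ ^ p := hθpow a₀ ha₀ p
      rw [ha₀p, hθ1, this] at h1
      exact h1.symm
    have hconja₀ : t⁻¹ * a₀ * t = a₀ * x := by rw [hxdef]; group
    have hcax : Commute a₀ x := hcomm a₀ ha₀ x hxA
    -- conjugation fixes powers of x
    have hfixpow : ∀ w : ℤ, t⁻¹ * x ^ w * t = x ^ w := by
      intro w
      have e1 := map_zpow (MulAut.conj t⁻¹) x w
      have e2 : (MulAut.conj t⁻¹) x = x := by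
        rw [MulAut.conj_apply]
        simpa using hxfix
      rw [e2] at e1
      rw [MulAut.conj_apply] at e1
      simpa using e1
    -- key coprimality fact
    have hkey : ∀ s w : ℤ, a₀ ^ s = x ^ w → (p : ℤ) ∣ s := by
      intro s w hsw
      by_contra hnd
      have hnd' : ¬ (p ∣ s.natAbs) := by rwa [Int.natCast_dvd] at hnd
      have hgcd : Int.gcd s (p : ℤ) = 1 := by
        have h1 : Nat.Coprime p s.natAbs := hp.coprime_iff_not_dvd.mpr hnd'
        have h2 : s.natAbs.gcd p = 1 := h1.symm
        simpa [Int.gcd] using h2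
      have hbez := Int.gcd_eq_gcd_ab s (p : ℤ)
      rw [hgcd] at hbez
      -- 1 = s * c + p * d
      have ha₀pz : a₀ ^ ((p : ℤ)) = 1 := by
        rw [zpow_natCast, ha₀p]
      have h3 : a₀ = x ^ (w * s.gcdA (p : ℤ)) := by
        calc a₀ = a₀ ^ (1 : ℤ) := (zpow_one a₀).symm
          _ = a₀ ^ (s * s.gcdA (p : ℤ) + (p : ℤ) * s.gcdB (p : ℤ)) := by rw [← hbez]; norm_num
          _ = (a₀ ^ s) ^ s.gcdA (p : ℤ) * (a₀ ^ ((p : ℤ))) ^ s.gcdB (p : ℤ) := by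
              rw [zpow_add, zpow_mul, zpow_mul]
          _ = (x ^ w) ^ s.gcdA (p : ℤ) := by rw [hsw, ha₀pz, one_zpow, mul_one]
          _ = x ^ (w * s.gcdA (p : ℤ)) := by rw [← zpow_mul]
      apply hx
      have h4 : t⁻¹ * a₀ * t = a₀ := by
        rw [h3, hfixpow]
      have h5 : x = a₀⁻¹ * (t⁻¹ * a₀ * t) := hxdef
      rw [h5, h4, inv_mul_cancel]
    -- the twisting cocycle
    set m : ℕ → G := fun i => (t ^ i)⁻¹ * (t * a₀) ^ i with hmdef
    have hm0 : m 0 = 1 := by simp [hmdef]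
    have hmsucc : ∀ i, m (i + 1) = t⁻¹ * m i * t * a₀ := by
      intro i
      show (t ^ (i + 1))⁻¹ * (t * a₀) ^ (i + 1) = t⁻¹ * ((t ^ i)⁻¹ * (t * a₀) ^ i) * t * a₀
      rw [pow_succ, pow_succ]
      group
    have hmA : ∀ i, m i ∈ A := by
      intro i
      induction i with
      | zero => rw [hm0]; exact A.one_mem
      | succ i ih =>
        rw [hmsucc]
        exact A.mul_mem (hconjmem _ ih) ha₀
    have hb : ∀ i : ℕ, (i + 1) * i / 2 = i * (i - 1) / 2 + i := by
      intro i
      cases i with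
      | zero => norm_num
      | succ j =>
        have e1 : (j + 1 + 1) * (j + 1) = (j + 1) * j + (j + 1) * 2 := by ring
        have e2 : (j + 1) * ((j + 1) - 1) = (j + 1) * j := by norm_num
        rw [e1, e2, Nat.add_mul_div_right _ _ (by norm_num : 0 < 2)]
    have hcj : ∀ (y : G) (k : ℕ), (t⁻¹ * y * t) ^ k = t⁻¹ * y ^ k * t := by
      intro y k
      induction k with
      | zero => simp
      | succ k ih => rw [pow_succ, pow_succ, ih]; group
    have hmform : ∀ i, m i = a₀ ^ i * x ^ (i * (i - 1) / 2) := by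
      intro i
      induction i with
      | zero => simp [hm0]
      | succ i ih =>
        rw [hmsucc, ih]
        have e1 : t⁻¹ * (a₀ ^ i * x ^ (i * (i - 1) / 2)) * t * a₀
            = (t⁻¹ * a₀ * t) ^ i * ((t⁻¹ * x * t) ^ (i * (i - 1) / 2)) * a₀ := by
          rw [hcj, hcj]; group
        rw [e1, hconja₀, hxfix, hcax.mul_pow]
        have e2 : a₀ ^ i * x ^ i * x ^ (i * (i - 1) / 2) * a₀
            = a₀ ^ i * (a₀ * (x ^ i * x ^ (i * (i - 1) / 2))) := by
          have hc2 : Commute a₀ (x ^ i * x ^ (i * (i - 1) / 2)) :=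
            (hcax.pow_right i).mul_right (hcax.pow_right _)
          rw [hc2.eq]
          group
        rw [e2, ← pow_add]
        have e3 : i + i * (i - 1) / 2 = (i + 1) * i / 2 := by
          rw [hb i]; omega
        have e4 : (i + 1) * (i + 1 - 1) / 2 = (i + 1) * i / 2 := by norm_num
        rw [e3, e4, ← mul_assoc, ← pow_succ]
    have hmcocycle : ∀ i j, m (i + j) = (t ^ j)⁻¹ * m i * t ^ j * m j := by
      intro i j
      show (t ^ (i + j))⁻¹ * (t * a₀) ^ (i + j)
          = (t ^ j)⁻¹ * ((t ^ i)⁻¹ * (t * a₀) ^ i) * t ^ j * ((t ^ j)⁻¹ * (t * a₀) ^ j)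
      rw [pow_add, pow_add]
      group
    have hmpn : m (p ^ n) = 1 := by
      rw [hmform]
      have e1 : a₀ ^ p ^ n = 1 := by
        have h5 : p ^ n = p * p ^ (n - 1) := by
          rw [← pow_succ']
          congr 1
          omega
        rw [h5, pow_mul, ha₀p, one_pow]
      have e2 : x ^ (p ^ n * (p ^ n - 1) / 2) = 1 := by
        have h2 : 2 ∣ p ^ n - 1 := by
          obtain ⟨c, hc⟩ := hodd.pow (n := n)
          omega
        obtain ⟨q, hq⟩ := h2
        have e3 : p ^ n * (p ^ n - 1) / 2 = p ^ n * q := by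
          rw [hq, Nat.mul_div_assoc _ (dvd_mul_right 2 q),
            Nat.mul_div_cancel_left q (by norm_num)]
        have e4 : p ∣ p ^ n * q := Dvd.dvd.mul_right (dvd_pow_self p (by omega)) q
        obtain ⟨w, hw⟩ := e4
        rw [e3, hw, pow_mul, hxp, one_pow]
      rw [e1, e2, one_mul]
    have hmperiod : ∀ i, m (i + p ^ n) = m i := by
      intro i
      rw [hmcocycle, hmpn, mul_one, hconjpn _ (hmA i)]
    have hmrep : ∀ q r : ℕ, m (r + p ^ n * q) = m r := by
      intro q
      induction q with
      | zero => intro r; simp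
      | succ q ih =>
        intro r
        have e2 : r + p ^ n * (q + 1) = (r + p ^ n * q) + p ^ n := by ring
        rw [e2, hmperiod, ih]
    have hmmod : ∀ i, m i = m (i % p ^ n) := by
      intro i
      conv_lhs => rw [show i = i % p ^ n + p ^ n * (i / p ^ n) from (Nat.mod_add_div i (p ^ n)).symm]
      exact hmrep _ _
    have hmm : ∀ i j : ℕ, i % p ^ n = j % p ^ n → m i = m j := by
      intro i j hij
      rw [hmmod i, hmmod j, hij]
    -- the automorphism σ
    let idx : G → ℕ := fun g => Classical.choose (hlog g)
    have hidx : ∀ g, (t ^ idx g)⁻¹ * g ∈ A := fun g => Classical.choose_spec (hlog g)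
    have hidx0 : ∀ g ∈ A, m (idx g) = 1 := by
      intro g hg
      have h0 : (t ^ 0)⁻¹ * g ∈ A := by simpa using hg
      have h1 := hmodeq g (idx g) 0 (hidx g) h0
      rw [hmm _ 0 (by simpa using h1), hm0]
    have hσmul : ∀ g1 g2 : G, (g1 * g2) * m (idx (g1 * g2)) = (g1 * m (idx g1)) * (g2 * m (idx g2)) := by
      intro g1 g2
      have hi := hidx g1
      have hj := hidx g2
      have hl := hidx (g1 * g2)
      have hij : (t ^ (idx g1 + idx g2))⁻¹ * (g1 * g2) ∈ A := by
        have e : (t ^ (idx g1 + idx g2))⁻¹ * (g1 * g2)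
            = ((t ^ idx g2)⁻¹ * ((t ^ idx g1)⁻¹ * g1) * t ^ idx g2) * ((t ^ idx g2)⁻¹ * g2) := by
          rw [pow_add]; group
        rw [e]
        refine A.mul_mem ?_ hj
        have := hA.conj_mem _ hi (t ^ idx g2)⁻¹
        simpa [mul_assoc] using this
      have hlij := hmodeq (g1 * g2) (idx (g1 * g2)) (idx g1 + idx g2) hl hij
      rw [hmm _ _ hlij, hmcocycle (idx g1) (idx g2)]
      have hY : (t ^ idx g2)⁻¹ * m (idx g1) * t ^ idx g2 ∈ A := by
        have := hA.conj_mem _ (hmA (idx g1)) (t ^ idx g2)⁻¹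
        simpa [mul_assoc] using this
      have hswap := hcomm _ hj _ hY
      -- g2 * Y = m (idx g1) * g2
      have hg2Y : g2 * ((t ^ idx g2)⁻¹ * m (idx g1) * t ^ idx g2) = m (idx g1) * g2 := by
        have e2 : g2 * ((t ^ idx g2)⁻¹ * m (idx g1) * t ^ idx g2)
            = t ^ idx g2 * (((t ^ idx g2)⁻¹ * g2) * ((t ^ idx g2)⁻¹ * m (idx g1) * t ^ idx g2)) := by
          group
        rw [e2, hswap]
        group
      calc g1 * g2 * ((t ^ idx g2)⁻¹ * m (idx g1) * t ^ idx g2 * m (idx g2))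
          = g1 * (g2 * ((t ^ idx g2)⁻¹ * m (idx g1) * t ^ idx g2)) * m (idx g2) := by group
        _ = g1 * (m (idx g1) * g2) * m (idx g2) := by rw [hg2Y]
        _ = (g1 * m (idx g1)) * (g2 * m (idx g2)) := by group
    let σh : G →* G :=
      { toFun := fun g => g * m (idx g)
        map_one' := by
          show 1 * m (idx 1) = 1
          rw [hidx0 1 A.one_mem, mul_one]
        map_mul' := hσmul }
    have hinj : Function.Injective σh := by
      rw [injective_iff_map_eq_one]
      intro g hg
      have hg' : g * m (idx g) = 1 := hg
      have hgA : g ∈ A := by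
        rw [eq_inv_of_mul_eq_one_left hg']
        exact A.inv_mem (hmA _)
      rw [hidx0 g hgA, mul_one] at hg'
      exact hg'
    have hbij := Finite.injective_iff_bijective.mp hinj
    obtain ⟨H, hH⟩ := h (MulEquiv.ofBijective σh hbij)
    have hσap : ∀ g : G, (MulEquiv.ofBijective σh hbij) g = g * m (idx g) := fun g => rfl
    have hmmem : ∀ i, m i ∈ H := by
      intro i
      show m i ∈ (H : Set G)
      rw [hH]
      refine ⟨t ^ i, ?_⟩
      rw [hσap]
      have hsame : idx (t ^ i) % p ^ n = i % p ^ n := by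
        refine hmodeq (t ^ i) _ _ (hidx _) ?_
        simpa using A.one_mem
      rw [hmm _ _ hsame]
      group
    have hmrev : ∀ y ∈ H, ∃ i, y = m i := by
      intro y hy
      have : y ∈ (H : Set G) := hy
      rw [hH] at this
      obtain ⟨g, hg⟩ := this
      refine ⟨idx g, ?_⟩
      rw [hg, hσap]
      group
    have hm1 : m 1 = a₀ := by
      show (t ^ 1)⁻¹ * (t * a₀) ^ 1 = a₀
      rw [pow_one, pow_one]
      group
    have ha₀H : a₀ ∈ H := hm1 ▸ hmmem 1
    obtain ⟨i, hi2⟩ := hmrev (a₀ * a₀) (H.mul_mem ha₀H ha₀H)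
    rw [hmform] at hi2
    -- a₀ * a₀ = a₀ ^ i * x ^ (i * (i-1) / 2)
    set bb := i * (i - 1) / 2 with hbbdef
    have h2i : a₀ ^ ((2 : ℤ) - (i : ℤ)) = x ^ ((bb : ℤ)) := by
      have e1 : a₀ ^ ((2 : ℤ) - (i : ℤ)) = (a₀ * a₀) * (a₀ ^ (i : ℕ))⁻¹ := by
        rw [sub_eq_add_neg, zpow_add, zpow_neg, zpow_natCast]
        congr 1
        rw [show (2 : ℤ) = ((2 : ℕ) : ℤ) by norm_num, zpow_natCast, pow_two]
      rw [e1, hi2]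
      have e2 : a₀ ^ i * x ^ bb * (a₀ ^ i)⁻¹ = x ^ bb := by
        rw [(hcax.pow_pow i bb).eq]
        group
      rw [e2, zpow_natCast]
    have hdvd2i : (p : ℤ) ∣ (2 - (i : ℤ)) := hkey _ _ h2i
    have ha₀pz : a₀ ^ ((p : ℤ)) = 1 := by rw [zpow_natCast, ha₀p]
    obtain ⟨w, hw⟩ := hdvd2i
    have hxb1 : x ^ ((bb : ℤ)) = 1 := by
      rw [← h2i, hw, zpow_mul, ha₀pz, one_zpow]
    have hxb1' : x ^ bb = 1 := by
      have := hxb1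
      rwa [zpow_natCast] at this
    have hordx : orderOf x = p := orderOf_eq_prime hxp hx
    have hpb : p ∣ bb := by
      have := orderOf_dvd_of_pow_eq_one hxb1'
      rwa [hordx] at this
    -- arithmetic contradiction
    have hdvd2' : 2 ∣ i * (i - 1) := by
      cases i with
      | zero => norm_num
      | succ j =>
        have e : (j + 1) * ((j + 1) - 1) = j * (j + 1) := by
          simp [Nat.succ_sub_one]
          ring
        rw [e]
        exact (Nat.even_mul_succ_self j).two_dvd
    have h2bb : 2 * bb = i * (i - 1) := by
      rw [hbbdef, Nat.mul_div_cancel' hdvd2']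
    have hZ : (2 : ℤ) * (bb : ℤ) = (i : ℤ) * ((i : ℤ) - 1) := by
      rcases Nat.eq_zero_or_pos i with hi0 | hip
      · have hb0 : bb = 0 := by rw [hbbdef, hi0]
        rw [hb0, hi0]
        norm_num
      · have hcast := congrArg (fun z : ℕ => (z : ℤ)) h2bb
        push_cast [Nat.cast_sub hip] at hcast
        linarith [hcast]
    have hdvd2 : (p : ℤ) ∣ 2 := by
      have hi' : (i : ℤ) = 2 - (p : ℤ) * w := by linarith [hw]
      have e6 : (2 : ℤ) * (bb : ℤ) - 2 = (p : ℤ) * ((p : ℤ) * w ^ 2 - 3 * w) := by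
        rw [hZ, hi']; ring
      have hb' : (p : ℤ) ∣ 2 * (bb : ℤ) := by
        obtain ⟨c, hc⟩ := hpb
        exact ⟨2 * c, by rw [hc]; push_cast; ring⟩
      have h7 := dvd_sub hb' ⟨_, e6⟩
      have e7 : (2 : ℤ) * (bb : ℤ) - ((2 : ℤ) * (bb : ℤ) - 2) = 2 := by ring
      rwa [e7] at h7
    have : (p : ℤ) ≤ 2 := Int.le_of_dvd (by norm_num) hdvd2
    have hple : p ≤ 2 := by exact_mod_cast this
    have hp2 : p = 2 := le_antisymm hple hp.two_le
    rw [hp2] at hodd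
    exact (by norm_num : ¬ Odd 2) hodd
  -- finish part 4
  have part4 : ∀ k : ℕ, 1 ≤ k → k ≤ n → ∀ a ∈ A, a ^ p ^ k = 1 → θ a ^ p ^ (k - 1) = 1 := by
    intro k hk1 hkn
    have hn : 1 ≤ n := hk1.trans hkn
    clear hkn
    induction k with
    | zero => exact absurd hk1 (by norm_num)
    | succ k ih =>
      intro a ha hak
      by_cases hk0 : k = 0
      · subst hk0
        have : θ a = 1 := base hn a ha (by simpa using hak)
        simpa using this
      · have hk1' : 1 ≤ k := Nat.one_le_iff_ne_zero.mpr hk0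
        have hap : (a ^ p) ^ p ^ k = 1 := by
          rw [← pow_mul]
          rw [show p * p ^ k = p ^ (k + 1) from (pow_succ' p k).symm]
          exact hak
        have hres := ih hk1' (a ^ p) (A.pow_mem ha p) hap
        rw [hθpow a ha p, ← pow_mul] at hres
        have : p * p ^ (k - 1) = p ^ ((k + 1) - 1) := by
          rw [← pow_succ']
          congr 1
          omega
        rwa [this] at hres
  exact ⟨part1, part2, part3, part4⟩
end
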